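/- arXiv:1905.07532 — 8 statements merged into one kernel-verified Lean document; each statement's English description precedes it below -/
import Mathlib

section
/- Let r, r̄, p, q be nonnegative integers with p < r̄ and r = q·r̄ + p. Then for every nonnegative integer k, [r - k·r̄]^+ = p·[q + 1 - k]^+ + (r̄ - p)·[q - k]^+. -/
/-- Decomposition of the positive part via Euclidean division. -/
theorem posPart_decomp (r rbar p q : ℕ) (hp : p < rbar) (hr : r = q * rbar + p) (k : ℕ) :
    max ((r : ℤ) - k * rbar) 0
      = p * max ((q : ℤ) + 1 - k) 0 + ((rbar : ℤ) - p) * max ((q : ℤ) - k) 0 := by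
  subst hr
  rcases le_or_gt k q with h | h
  · have hk : (k : ℤ) ≤ q := by exact_mod_cast h
    rw [max_eq_left (by push_cast; nlinarith [Int.ofNat_nonneg rbar, Int.ofNat_nonneg p] : (0:ℤ) ≤ ((q * rbar + p : ℕ) : ℤ) - k * rbar),
        max_eq_left (by linarith), max_eq_left (by linarith)]
    push_cast
    ring
  · have hk : (q : ℤ) + 1 ≤ k := by exact_mod_cast h
    have hp' : (p : ℤ) < rbar := by exact_mod_cast hp
    rw [max_eq_right (by push_cast; nlinarith [Int.ofNat_nonneg rbar, Int.ofNat_nonneg p] : ((q * rbar + p : ℕ) : ℤ) - k * rbar ≤ 0),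
        max_eq_right (by linarith), max_eq_right (by linarith)]
    ring
end

section
/- For nonnegative integer vectors x, y (of lengths N and M respectively), x is weakly submajorized by y if and only if y* is weakly supermajorized by x*. -/
/-- Sum of the `k` largest entries of `x` (padding with zeros if `k` exceeds the length). -/
def topSum {N : ℕ} (x : Fin N → ℕ) (k : ℕ) : ℕ :=
  (Finset.univ.powerset.filter (fun S : Finset (Fin N) => S.card ≤ k)).sup
    (fun S => ∑ i ∈ S, x i)

/-- The partition conjugate: `conj N x j = #{n : x n ≥ j}`. -/
def conj (N : ℕ) (x : Fin N → ℕ) (j : ℕ) : ℕ :=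
  (Finset.univ.filter (fun n => j ≤ x n)).card

/-- Sum of truncated entries `(x i - t)₊`. -/
def fsum {N : ℕ} (x : Fin N → ℕ) (t : ℕ) : ℕ := ∑ i, (x i - t)

lemma sum_le_topSum {N : ℕ} (x : Fin N → ℕ) (k : ℕ) (S : Finset (Fin N))
    (hS : S.card ≤ k) : ∑ i ∈ S, x i ≤ topSum x k := by
  unfold topSum
  exact Finset.le_sup (f := fun T => ∑ i ∈ T, x i)
    (Finset.mem_filter.mpr ⟨Finset.mem_powerset.mpr (Finset.subset_univ S), hS⟩)

lemma topSum_le {N : ℕ} (x : Fin N → ℕ) (k t : ℕ) :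
    topSum x k ≤ k * t + fsum x t := by
  apply Finset.sup_le
  intro S hS
  simp only [Finset.mem_filter, Finset.mem_powerset] at hS
  calc ∑ i ∈ S, x i ≤ ∑ i ∈ S, (t + (x i - t)) :=
        Finset.sum_le_sum (fun i _ => le_add_tsub)
    _ = S.card * t + ∑ i ∈ S, (x i - t) := by
        rw [Finset.sum_add_distrib, Finset.sum_const, smul_eq_mul]
    _ ≤ k * t + fsum x t := by
        refine Nat.add_le_add (Nat.mul_le_mul_right t hS.2) ?_
        exact Finset.sum_le_sum_of_subset (Finset.subset_univ S)

lemma sum_filter_lt {N : ℕ} (x : Fin N → ℕ) (t : ℕ) :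
    ∑ i ∈ Finset.univ.filter (fun i => t < x i), x i
      = (Finset.univ.filter (fun i => t < x i)).card * t + fsum x t := by
  set S := Finset.univ.filter (fun i => t < x i) with hSdef
  have h1 : ∑ i ∈ S, x i = ∑ i ∈ S, (t + (x i - t)) := by
    refine Finset.sum_congr rfl fun i hi => ?_
    have : t < x i := (Finset.mem_filter.mp hi).2
    omega
  have h2 : fsum x t = ∑ i ∈ S, (x i - t) := by
    unfold fsum
    refine (Finset.sum_subset (Finset.subset_univ S) fun i _ hi => ?_).symm
    have : ¬ t < x i := by
      intro h
      exact hi (Finset.mem_filter.mpr ⟨Finset.mem_univ i, h⟩)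
    omega
  rw [h1, Finset.sum_add_distrib, Finset.sum_const, smul_eq_mul, h2]

lemma le_topSum_card {N : ℕ} (x : Fin N → ℕ) (t : ℕ) :
    (Finset.univ.filter (fun i => t < x i)).card * t + fsum x t
      ≤ topSum x (Finset.univ.filter (fun i => t < x i)).card := by
  rw [← sum_filter_lt]
  exact sum_le_topSum x _ _ le_rfl

lemma exists_t {N : ℕ} (x : Fin N → ℕ) (k K : ℕ) (hK : ∀ i, x i ≤ K) :
    ∃ t, k * t + fsum x t ≤ topSum x k := by
  classical
  have hex : ∃ t, (Finset.univ.filter (fun i => t < x i)).card ≤ k := by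
    refine ⟨K, ?_⟩
    have hempty : Finset.univ.filter (fun i : Fin N => K < x i) = ∅ := by
      ext i
      simp only [Finset.mem_filter, Finset.mem_univ, true_and, Finset.notMem_empty, iff_false]
      exact not_lt.mpr (hK i)
    simp [hempty]
  set t := Nat.find hex with ht
  have hct : (Finset.univ.filter (fun i => t < x i)).card ≤ k := Nat.find_spec hex
  refine ⟨t, ?_⟩
  rcases Nat.eq_zero_or_pos t with h0 | hpos
  · rw [h0]
    have := le_topSum_card x 0
    calc k * 0 + fsum x 0 = (Finset.univ.filter (fun i => 0 < x i)).card * 0 + fsum x 0 := by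
          simp
      _ ≤ topSum x (Finset.univ.filter (fun i => 0 < x i)).card := le_topSum_card x 0
      _ ≤ topSum x k := by
          apply Finset.sup_le
          intro S hS
          simp only [Finset.mem_filter, Finset.mem_powerset] at hS
          refine sum_le_topSum x k S (le_trans hS.2 ?_)
          rw [← h0]; exact hct
  · -- t > 0 : there are more than k entries ≥ t
    have hmin : ¬ (Finset.univ.filter (fun i => t - 1 < x i)).card ≤ k :=
      Nat.find_min hex (by omega)
    have hfilter : Finset.univ.filter (fun i : Fin N => t - 1 < x i)
        = Finset.univ.filter (fun i => t ≤ x i) := by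
      ext i
      simp only [Finset.mem_filter, Finset.mem_univ, true_and]
      omega
    rw [hfilter] at hmin
    have hge : k < (Finset.univ.filter (fun i => t ≤ x i)).card := not_le.mp hmin
    set A := Finset.univ.filter (fun i => t < x i) with hA
    set B := Finset.univ.filter (fun i : Fin N => x i = t) with hB
    have hdisj : Disjoint A B := by
      rw [Finset.disjoint_filter]
      intro i _ hi
      omega
    have hunion : A ∪ B = Finset.univ.filter (fun i => t ≤ x i) := by
      ext i
      simp only [Finset.mem_union, Finset.mem_filter, Finset.mem_univ, true_and, hA, hB]
      omega
    have hcard : A.card + B.card = (Finset.univ.filter (fun i => t ≤ x i)).card := by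
      rw [← hunion, Finset.card_union_of_disjoint hdisj]
    have hBcard : k - A.card ≤ B.card := by omega
    obtain ⟨T, hTB, hTcard⟩ := Finset.exists_subset_card_eq hBcard
    have hdisjAT : Disjoint A T := hdisj.mono_right hTB
    have hScard : (A ∪ T).card = k := by
      rw [Finset.card_union_of_disjoint hdisjAT, hTcard]
      omega
    have hsum : ∑ i ∈ A ∪ T, x i = k * t + fsum x t := by
      rw [Finset.sum_union hdisjAT]
      have hTsum : ∑ i ∈ T, x i = T.card * t := by
        rw [Finset.sum_congr rfl (fun i hi => ?_), Finset.sum_const, smul_eq_mul]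
        have := hTB hi
        exact (Finset.mem_filter.mp this).2
      have hsumA : ∑ i ∈ A, x i = A.card * t + fsum x t := by
        rw [hA]; exact sum_filter_lt x t
      rw [hsumA, hTsum, hTcard]
      have hAc : A.card ≤ k := hct
      have hmul : A.card * t + (k - A.card) * t = k * t := by
        rw [← Nat.add_mul, Nat.add_sub_cancel' hAc]
      omega
    rw [← hsum]
    exact sum_le_topSum x k (A ∪ T) (le_of_eq hScard)

lemma conj_sum {N K : ℕ} (t : ℕ) (x : Fin N → ℕ) (hK : ∀ i, x i ≤ K) :
    ∑ j ∈ Finset.Icc (t + 1) K, conj N x j = fsum x t := by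
  unfold conj fsum
  have h1 : ∀ j, (Finset.univ.filter (fun n => j ≤ x n)).card
      = ∑ i : Fin N, (if j ≤ x i then 1 else 0) := fun j => Finset.card_filter _ _
  simp_rw [h1]
  rw [Finset.sum_comm]
  refine Finset.sum_congr rfl fun i _ => ?_
  rw [← Finset.card_filter]
  have : (Finset.Icc (t + 1) K).filter (fun j => j ≤ x i) = Finset.Icc (t + 1) (x i) := by
    ext j
    simp only [Finset.mem_filter, Finset.mem_Icc]
    have := hK i
    omega
  rw [this, Nat.card_Icc]
  omega

/-- `x ≺_w y` (weak submajorization) holds iff `y* ≺^w x*` (the conjugate of `y` is weakly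
supermajorized by the conjugate of `x`).  The conjugates are regarded as non-increasing
vectors of a common length `K`, so that the sum of their `n` smallest entries is the sum of
the entries indexed by `K - n + 1, ..., K`. -/
theorem submajorize_iff_conj_supermajorize (N M K : ℕ) (x : Fin N → ℕ) (y : Fin M → ℕ)
    (hxK : ∀ n, x n ≤ K) (hyK : ∀ m, y m ≤ K) :
    (∀ k, topSum x k ≤ topSum y k) ↔
      (∀ n ≤ K,
        ∑ j ∈ Finset.Icc (K - n + 1) K, conj N x j ≤
          ∑ j ∈ Finset.Icc (K - n + 1) K, conj M y j) := by
  constructor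
  · intro h n _
    rw [conj_sum (K - n) x hxK, conj_sum (K - n) y hyK]
    set t := K - n
    set c := (Finset.univ.filter (fun i => t < x i)).card with hc
    have h1 : c * t + fsum x t ≤ topSum x c := le_topSum_card x t
    have h2 : topSum y c ≤ c * t + fsum y t := topSum_le y c t
    have h3 := h c
    omega
  · intro h k
    have hf : ∀ t, fsum x t ≤ fsum y t := by
      intro t
      by_cases ht : t ≤ K
      · have hh := h (K - t) (by omega)
        rw [show K - (K - t) = t from by omega] at hh
        rwa [conj_sum t x hxK, conj_sum t y hyK] at hh
      · have hx0 : fsum x t = 0 :=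
          Finset.sum_eq_zero fun i _ => by have := hxK i; omega
        simp [hx0]
    obtain ⟨t, ht⟩ := exists_t y k K hyK
    calc topSum x k ≤ k * t + fsum x t := topSum_le x k t
      _ ≤ k * t + fsum y t := Nat.add_le_add_left (hf t) _
      _ ≤ topSum y k := ht
end

section
/- (Gale–Ryser) Given nonnegative integer vectors h in N^T and r in N^N with ||h||_1 = ||r||_1, there exists an N×T matrix A with entries in {0,1} whose n-th row sums to r_n for each n and whose j-th column sums to h_j for each j, if and only if h is majorized by r*, the partition conjugate of r. -/
open Finset

namespace GR

lemma sum_le_topSum {N k : ℕ} (x : Fin N → ℕ) {S : Finset (Fin N)} (hS : S.card ≤ k) :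
    ∑ i ∈ S, x i ≤ topSum x k := by
  apply Finset.le_sup (f := fun S => ∑ i ∈ S, x i)
  simp [hS]

lemma topSum_le {N k c : ℕ} (x : Fin N → ℕ)
    (H : ∀ S : Finset (Fin N), S.card ≤ k → ∑ i ∈ S, x i ≤ c) : topSum x k ≤ c := by
  apply Finset.sup_le
  intro S hS
  simp only [Finset.mem_filter, Finset.mem_powerset] at hS
  exact H S hS.2

lemma topSum_comp_perm {T k : ℕ} (x : Fin T → ℕ) (σ : Equiv.Perm (Fin T)) :
    topSum (x ∘ σ) k = topSum x k := by
  apply le_antisymm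
  · apply topSum_le
    intro S hS
    have : ∑ i ∈ S, (x ∘ σ) i = ∑ j ∈ S.image σ, x j := by
      rw [Finset.sum_image (by intro a _ b _ hab; exact σ.injective hab)]
      rfl
    rw [this]
    exact sum_le_topSum x (le_trans (Finset.card_image_le) hS)
  · apply topSum_le
    intro S hS
    have : ∑ i ∈ S, x i = ∑ j ∈ S.image σ.symm, (x ∘ σ) j := by
      rw [Finset.sum_image (by intro a _ b _ hab; exact σ.symm.injective hab)]
      simp
    rw [this]
    exact sum_le_topSum _ (le_trans (Finset.card_image_le) hS)

/-- prefix sum: sum of `x j` over indices with `j < k`. -/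
def pre {T : ℕ} (x : Fin T → ℕ) (k : ℕ) : ℕ :=
  ∑ j ∈ Finset.univ.filter (fun j : Fin T => (j : ℕ) < k), x j

lemma filter_lt_eq_image {T c : ℕ} (hc : c ≤ T) :
    Finset.univ.filter (fun j : Fin T => (j : ℕ) < c)
      = (Finset.univ : Finset (Fin c)).image (Fin.castLE hc) := by
  ext j
  simp only [Finset.mem_filter, Finset.mem_univ, true_and, Finset.mem_image]
  constructor
  · intro hj; exact ⟨⟨j, hj⟩, rfl⟩
  · rintro ⟨i, rfl⟩; exact i.isLt

lemma card_filter_lt {T c : ℕ} (hc : c ≤ T) :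
    (Finset.univ.filter (fun j : Fin T => (j : ℕ) < c)).card = c := by
  rw [filter_lt_eq_image hc, Finset.card_image_of_injective _ (Fin.castLE_injective hc)]
  simp

lemma pre_eq_sum_fin {T c : ℕ} (hc : c ≤ T) (x : Fin T → ℕ) :
    pre x c = ∑ i : Fin c, x (Fin.castLE hc i) := by
  unfold pre
  rw [filter_lt_eq_image hc,
    Finset.sum_image (by intro a _ b _ hab; exact Fin.castLE_injective hc hab)]

lemma card_filter_lt_le {T c : ℕ} :
    (Finset.univ.filter (fun j : Fin T => (j : ℕ) < c)).card ≤ c := by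
  classical
  calc (Finset.univ.filter (fun j : Fin T => (j : ℕ) < c)).card
      ≤ (Finset.range c).card := by
        refine Finset.card_le_card_of_injOn (fun j => (j : ℕ)) ?_ ?_
        · intro j hj; simp at hj; simp [hj]
        · intro a _ b _ hab; exact Fin.val_injective hab
    _ = c := Finset.card_range c

lemma pre_le_topSum {T k : ℕ} (x : Fin T → ℕ) : pre x k ≤ topSum x k :=
  sum_le_topSum x card_filter_lt_le

lemma pre_mono {T : ℕ} (x : Fin T → ℕ) {k l : ℕ} (hkl : k ≤ l) : pre x k ≤ pre x l := by
  apply Finset.sum_le_sum_of_subset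
  intro j hj
  simp only [Finset.mem_filter] at hj ⊢
  exact ⟨hj.1, lt_of_lt_of_le hj.2 hkl⟩

lemma strictMono_nat_le {c : ℕ} (g : Fin c → ℕ) (hg : StrictMono g) (i : Fin c) :
    (i : ℕ) ≤ g i := by
  have : ∀ m : ℕ, ∀ i : Fin c, (i : ℕ) = m → m ≤ g i := by
    intro m
    induction m with
    | zero => intro i _; exact Nat.zero_le _
    | succ m ih =>
      intro i hi
      have hm : m < c := by omega
      have h1 : (⟨m, hm⟩ : Fin c) < i := by
        simp [Fin.lt_def, hi]
      have := hg h1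
      have := ih ⟨m, hm⟩ rfl
      omega
  exact this _ i rfl

lemma topSum_eq_pre {T k : ℕ} (x : Fin T → ℕ)
    (hx : ∀ i j : Fin T, i ≤ j → x j ≤ x i) : topSum x k = pre x k := by
  apply le_antisymm
  · apply topSum_le
    intro S hS
    set c := S.card with hc
    have hcT : c ≤ T := le_trans (Finset.card_le_card (Finset.subset_univ S)) (by simp)
    have e := S.orderIsoOfFin (rfl : S.card = c)
    have hsum : ∑ i ∈ S, x i = ∑ i : Fin c, x (e i) := by
      rw [← Finset.sum_attach S (fun j => x j)]
      exact Fintype.sum_equiv e.toEquiv.symm _ _ (by intro i; simp)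
    rw [hsum]
    have hle : ∀ i : Fin c, x ((e i : Fin T)) ≤ x (⟨i, lt_of_lt_of_le i.isLt hcT⟩ : Fin T) := by
      intro i
      apply hx
      have hsm : StrictMono (fun i : Fin c => ((e i : Fin T) : ℕ)) := by
        intro a b hab
        have : (e a : Fin T) < (e b : Fin T) := by
          have := e.lt_iff_lt.2 hab
          exact this
        exact this
      have := strictMono_nat_le _ hsm i
      exact Fin.mk_le_of_le_val this
    calc ∑ i : Fin c, x (e i) ≤ ∑ i : Fin c, x (⟨i, lt_of_lt_of_le i.isLt hcT⟩ : Fin T) :=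
          Finset.sum_le_sum (fun i _ => hle i)
      _ = pre x c := by
          rw [pre_eq_sum_fin hcT]
          rfl
      _ ≤ pre x k := pre_mono x hS
  · exact pre_le_topSum x

def isReal (N T : ℕ) (r : Fin N → ℕ) (g : Fin T → ℕ) : Prop :=
  ∃ A : Fin N → Fin T → ℕ,
    (∀ n j, A n j ≤ 1) ∧ (∀ n, ∑ j, A n j = r n) ∧ (∀ j, ∑ n, A n j = g j)

lemma isReal_perm {N T : ℕ} {r : Fin N → ℕ} {g : Fin T → ℕ} (hg : isReal N T r g)
    (σ : Equiv.Perm (Fin T)) : isReal N T r (g ∘ σ) := by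
  obtain ⟨A, h1, h2, h3⟩ := hg
  refine ⟨fun n j => A n (σ j), fun n j => h1 n (σ j), fun n => ?_, fun j => h3 (σ j)⟩
  rw [← h2 n]
  exact Equiv.sum_comp σ (A n)

lemma sum_update_mem {α : Type*} [Fintype α] [DecidableEq α] {s : Finset α} {c : α} (h : c ∈ s)
    (g : α → ℕ) (b : ℕ) :
    ∑ j ∈ s, Function.update g c b j + g c = ∑ j ∈ s, g j + b := by
  rw [Finset.sum_update_of_mem h]
  have := Finset.sum_eq_sum_sdiff_singleton_add h g
  omega

lemma sum_update_notMem {α : Type*} [Fintype α] [DecidableEq α] {s : Finset α} {c : α}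
    (h : c ∉ s) (g : α → ℕ) (b : ℕ) :
    ∑ j ∈ s, Function.update g c b j = ∑ j ∈ s, g j := by
  apply Finset.sum_congr rfl
  intro j hj
  exact Function.update_of_ne (by rintro rfl; exact h hj) _ _

/-- transferring one unit from a larger column to a smaller one preserves realizability -/
lemma isReal_transfer {N T : ℕ} {r : Fin N → ℕ} {g : Fin T → ℕ} (hg : isReal N T r g)
    {i j : Fin T} (hij : g j < g i) :
    isReal N T r (Function.update (Function.update g i (g i - 1)) j (g j + 1)) := by
  classical
  obtain ⟨A, h1, h2, h3⟩ := hg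
  have hne : i ≠ j := by rintro rfl; omega
  have hex : ∃ n0, A n0 i = 1 ∧ A n0 j = 0 := by
    by_contra hcon
    push_neg at hcon
    have hle : ∀ n, A n i ≤ A n j := by
      intro n
      by_cases hAn : A n i = 1
      · have := hcon n hAn
        have := h1 n j
        omega
      · have := h1 n i
        omega
    have : g i ≤ g j := by
      rw [← h3 i, ← h3 j]
      exact Finset.sum_le_sum (fun n _ => hle n)
    omega
  obtain ⟨n0, hi0, hj0⟩ := hex
  set row' : Fin T → ℕ := Function.update (Function.update (A n0) i 0) j 1 with hrow
  have hrow_apply : ∀ l, row' l = if l = j then 1 else if l = i then 0 else A n0 l := by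
    intro l
    rw [hrow, Function.update_apply, Function.update_apply]
  refine ⟨Function.update A n0 row', ?_, ?_, ?_⟩
  · intro n l
    rw [Function.update_apply]
    by_cases hn : n = n0
    · rw [if_pos hn, hrow_apply]
      have := h1 n0 l
      split
      · omega
      · split
        · omega
        · omega
    · rw [if_neg hn]; exact h1 n l
  · intro n
    by_cases hn : n = n0
    · simp only [hn, Function.update_self]
      have e1 := sum_update_mem (Finset.mem_univ j) (Function.update (A n0) i 0) 1
      have e2 := sum_update_mem (Finset.mem_univ i) (A n0) 0
      have e3 : Function.update (A n0) i 0 j = A n0 j := Function.update_of_ne (Ne.symm hne) _ _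
      have e4 := h2 n0
      rw [hrow]
      omega
    · rw [Function.update_of_ne hn]; exact h2 n
  · intro l
    have key : ∀ n, Function.update A n0 row' n l
        = Function.update (fun m => A m l) n0 (row' l) n := by
      intro n
      by_cases hn : n = n0
      · rw [hn]; simp
      · rw [Function.update_of_ne hn, Function.update_of_ne hn]
    have hsum : ∑ n, Function.update A n0 row' n l
        = ∑ n, Function.update (fun m => A m l) n0 (row' l) n :=
      Finset.sum_congr rfl (fun n _ => key n)
    rw [hsum]
    have e1 := sum_update_mem (Finset.mem_univ n0) (fun m => A m l) (row' l)
    have e2 := h3 l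
    rw [Function.update_apply, Function.update_apply]
    by_cases hlj : l = j
    · have hv : row' l = 1 := by rw [hrow_apply, if_pos hlj]
      rw [if_pos hlj, hv]
      rw [hv] at e1
      have ha : A n0 l = 0 := by rw [hlj]; exact hj0
      have eg : g l = g j := by rw [hlj]
      omega
    by_cases hli : l = i
    · have hv : row' l = 0 := by rw [hrow_apply, if_neg hlj, if_pos hli]
      rw [if_neg hlj, if_pos hli, hv]
      rw [hv] at e1
      have ha : A n0 l = 1 := by rw [hli]; exact hi0
      have eg : g l = g i := by rw [hli]
      omega
    · have hv : row' l = A n0 l := by rw [hrow_apply, if_neg hlj, if_neg hli]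
      rw [if_neg hlj, if_neg hli, hv]
      rw [hv] at e1
      omega

/-- the canonical Ryser matrix realizes the conjugate partition -/
lemma isReal_conj {N T : ℕ} (r : Fin N → ℕ) (hrT : ∀ n, r n ≤ T) :
    isReal N T r (fun j => (Finset.univ.filter (fun n : Fin N => (j : ℕ) + 1 ≤ r n)).card) := by
  classical
  refine ⟨fun n j => if (j : ℕ) < r n then 1 else 0, ?_, ?_, ?_⟩
  · intro n j
    show (if (j : ℕ) < r n then 1 else 0) ≤ 1
    split <;> omega
  · intro n
    show (∑ j : Fin T, if (j : ℕ) < r n then 1 else 0) = r n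
    rw [Finset.sum_boole]
    simp [card_filter_lt (hrT n)]
  · intro j
    show (∑ n : Fin N, if (j : ℕ) < r n then 1 else 0)
        = (Finset.univ.filter (fun n : Fin N => (j : ℕ) + 1 ≤ r n)).card
    rw [Finset.sum_boole]
    simp only [Nat.cast_id]
    congr 1

lemma sum_pair {T : ℕ} {p q : Fin T} (hpq : p ≠ q) {f g : Fin T → ℕ}
    (hagree : ∀ l, l ≠ p → l ≠ q → f l = g l) :
    ∑ j, f j + g p + g q = ∑ j, g j + f p + f q := by
  classical
  have hq : q ∈ (Finset.univ : Finset (Fin T)) \ {p} := by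
    simp [Ne.symm hpq, hpq]
  have ef1 := Finset.sum_eq_sum_sdiff_singleton_add (Finset.mem_univ p) f
  have ef2 := Finset.sum_eq_sum_sdiff_singleton_add hq f
  have eg1 := Finset.sum_eq_sum_sdiff_singleton_add (Finset.mem_univ p) g
  have eg2 := Finset.sum_eq_sum_sdiff_singleton_add hq g
  have ecore : ∑ j ∈ ((Finset.univ : Finset (Fin T)) \ {p}) \ {q}, f j
      = ∑ j ∈ ((Finset.univ : Finset (Fin T)) \ {p}) \ {q}, g j := by
    apply Finset.sum_congr rfl
    intro l hl
    simp only [Finset.mem_sdiff, Finset.mem_singleton] at hl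
    exact hagree l hl.1.2 hl.2
  omega

lemma chain {N T : ℕ} (r : Fin N → ℕ) :
    ∀ (fuel : ℕ) (x y : Fin T → ℕ),
      (∑ j, y j * y j) ≤ fuel →
      (∀ i j : Fin T, i ≤ j → x j ≤ x i) →
      (∑ j, x j) = (∑ j, y j) →
      (∀ k, topSum x k ≤ topSum y k) →
      isReal N T r y → isReal N T r x := by
  classical
  intro fuel
  induction fuel using Nat.strong_induction_on with
  | _ fuel ih =>
  intro x y hfuel hx hsum hmaj hy
  set σ : Equiv.Perm (Fin T) := (Fin.revPerm).trans (Tuple.sort y) with hσdef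
  set z : Fin T → ℕ := y ∘ σ with hz
  have hσ : ∀ j, σ j = Tuple.sort y (Fin.rev j) := fun j => rfl
  have hzanti : ∀ i j : Fin T, i ≤ j → z j ≤ z i := by
    intro i j hij
    have hmono := Tuple.monotone_sort y
    have hrev : Fin.rev j ≤ Fin.rev i := Fin.rev_le_rev.mpr hij
    exact hmono hrev
  have hzy_top : ∀ k, topSum z k = topSum y k := fun k => topSum_comp_perm y σ
  have hzsum : ∑ j, z j = ∑ j, y j := Equiv.sum_comp σ y
  have hzsq : ∑ j, z j * z j = ∑ j, y j * y j := Equiv.sum_comp σ (fun j => y j * y j)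
  have hzreal : isReal N T r z := isReal_perm hy σ
  by_cases hxz : x = z
  · rw [hxz]; exact hzreal
  have hne : (Finset.univ.filter fun l => x l ≠ z l).Nonempty := by
    by_contra hcon
    rw [Finset.not_nonempty_iff_eq_empty, Finset.filter_eq_empty_iff] at hcon
    apply hxz
    funext l
    have := hcon (Finset.mem_univ l)
    simpa using this
  set p := (Finset.univ.filter fun l => x l ≠ z l).min' hne with hpdef
  have hpmem := (Finset.univ.filter fun l => x l ≠ z l).min'_mem hne
  have hp : x p ≠ z p := by
    rw [← hpdef] at hpmem
    exact (Finset.mem_filter.1 hpmem).2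
  have hlt_p : ∀ l, l < p → x l = z l := by
    intro l hl
    by_contra hc
    have : p ≤ l := Finset.min'_le _ _ (Finset.mem_filter.2 ⟨Finset.mem_univ l, hc⟩)
    exact absurd hl (not_lt.2 this)
  have hxp : x p < z p := by
    rcases lt_or_gt_of_ne hp with hlt | hgt
    · exact hlt
    · exfalso
      have h1 : topSum x ((p : ℕ) + 1) ≤ topSum z ((p : ℕ) + 1) := by
        rw [hzy_top]; exact hmaj _
      rw [topSum_eq_pre x hx, topSum_eq_pre z hzanti] at h1
      have h2 : pre z ((p : ℕ) + 1) < pre x ((p : ℕ) + 1) := by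
        apply Finset.sum_lt_sum
        · intro l hl
          simp only [Finset.mem_filter] at hl
          rcases lt_trichotomy l p with h | h | h
          · exact le_of_eq (hlt_p l h).symm
          · rw [h]; omega
          · exfalso
            have : (p : ℕ) < (l : ℕ) := h
            omega
        · refine ⟨p, ?_, hgt⟩
          simp
      omega
  have hqne : (Finset.univ.filter fun l => z l < x l).Nonempty := by
    by_contra hcon
    rw [Finset.not_nonempty_iff_eq_empty, Finset.filter_eq_empty_iff] at hcon
    have hle : ∀ l, x l ≤ z l := by
      intro l
      have := hcon (Finset.mem_univ l)
      omega
    have : ∑ j, x j < ∑ j, z j :=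
      Finset.sum_lt_sum (fun l _ => hle l) ⟨p, Finset.mem_univ p, hxp⟩
    omega
  set q := (Finset.univ.filter fun l => z l < x l).min' hqne with hqdef
  have hqmem := (Finset.univ.filter fun l => z l < x l).min'_mem hqne
  have hq : z q < x q := by
    rw [← hqdef] at hqmem
    exact (Finset.mem_filter.1 hqmem).2
  have hlt_q : ∀ l, l < q → x l ≤ z l := by
    intro l hl
    by_contra hc
    have : q ≤ l := Finset.min'_le _ _ (Finset.mem_filter.2 ⟨Finset.mem_univ l, by omega⟩)
    exact absurd hl (not_lt.2 this)
  have hpq : p < q := by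
    have hne2 : p ≠ q := by
      intro e
      rw [e] at hxp
      omega
    have hple : p ≤ q := Finset.min'_le _ _ (Finset.mem_filter.2 ⟨Finset.mem_univ q, by omega⟩)
    exact lt_of_le_of_ne hple hne2
  have hpq_ne : p ≠ q := ne_of_lt hpq
  have hzpq : z q + 2 ≤ z p := by
    have h1 : x q ≤ x p := hx p q (le_of_lt hpq)
    omega
  set z' : Fin T → ℕ := Function.update (Function.update z p (z p - 1)) q (z q + 1) with hz'def
  have hz'real : isReal N T r z' := isReal_transfer hzreal (show z q < z p by omega)
  have hz'p : z' p = z p - 1 := by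
    rw [hz'def, Function.update_of_ne hpq_ne, Function.update_self]
  have hz'q : z' q = z q + 1 := by rw [hz'def, Function.update_self]
  have hz'other : ∀ l, l ≠ p → l ≠ q → z' l = z l := by
    intro l hlp hlq
    rw [hz'def, Function.update_of_ne hlq, Function.update_of_ne hlp]
  -- sums over arbitrary sets
  have hz'sum_on : ∀ s : Finset (Fin T), p ∈ s → q ∈ s → ∑ j ∈ s, z' j = ∑ j ∈ s, z j := by
    intro s hps hqs
    have e1 := sum_update_mem hqs (Function.update z p (z p - 1)) (z q + 1)
    have e2 := sum_update_mem hps z (z p - 1)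
    have e3 : Function.update z p (z p - 1) q = z q :=
      Function.update_of_ne (Ne.symm hpq_ne) _ _
    rw [hz'def]
    omega
  have hz'sum_p : ∀ s : Finset (Fin T), p ∈ s → q ∉ s →
      ∑ j ∈ s, z' j + 1 = ∑ j ∈ s, z j := by
    intro s hps hqs
    have e1 := sum_update_notMem hqs (Function.update z p (z p - 1)) (z q + 1)
    have e2 := sum_update_mem hps z (z p - 1)
    rw [hz'def]
    omega
  have hz'sum_none : ∀ s : Finset (Fin T), p ∉ s → q ∉ s →
      ∑ j ∈ s, z' j = ∑ j ∈ s, z j := by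
    intro s hps hqs
    have e1 := sum_update_notMem hqs (Function.update z p (z p - 1)) (z q + 1)
    have e2 := sum_update_notMem hps z (z p - 1)
    rw [hz'def]
    omega
  have hz'total : ∑ j, x j = ∑ j, z' j := by
    have := hz'sum_on Finset.univ (Finset.mem_univ p) (Finset.mem_univ q)
    omega
  -- measure decreases
  have hsq := sum_pair hpq_ne (f := fun j => z' j * z' j) (g := fun j => z j * z j)
    (fun l hlp hlq => congrArg (fun t => t * t) (hz'other l hlp hlq))
  have hmlt : z' p * z' p + z' q * z' q < z p * z p + z q * z q := by
    rw [hz'p, hz'q]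
    obtain ⟨a, ha⟩ : ∃ a, z p = a + 1 := ⟨z p - 1, by omega⟩
    rw [ha]
    have hba : z q + 1 ≤ a := by omega
    simp only [Nat.add_sub_cancel]
    nlinarith
  have hz'sq : ∑ j, z' j * z' j < fuel := by
    have h1 := hsq
    omega
  -- majorization is preserved
  have hmaj' : ∀ k, topSum x k ≤ topSum z' k := by
    intro k
    rw [topSum_eq_pre x hx]
    refine le_trans ?_ (pre_le_topSum z')
    by_cases hqk : (q : ℕ) < k
    · have hpk : (p : ℕ) < k := lt_trans hpq hqk
      have e : pre z' k = pre z k :=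
        hz'sum_on (Finset.univ.filter (fun j : Fin T => (j : ℕ) < k))
          (by simp [hpk]) (by simp [hqk])
      have h1 : pre x k ≤ pre z k := by
        rw [← topSum_eq_pre x hx, ← topSum_eq_pre z hzanti, hzy_top]
        exact hmaj k
      omega
    by_cases hpk : (p : ℕ) < k
    · have e : pre z' k + 1 = pre z k :=
        hz'sum_p (Finset.univ.filter (fun j : Fin T => (j : ℕ) < k))
          (by simp [hpk]) (by simp [hqk])
      have hlt : pre x k < pre z k := by
        refine Finset.sum_lt_sum ?_ ⟨p, by simp [hpk], hxp⟩
        intro l hl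
        simp only [Finset.mem_filter] at hl
        apply hlt_q
        have : (l : ℕ) < (q : ℕ) := by omega
        exact this
      omega
    · have e : pre z' k = pre z k :=
        hz'sum_none (Finset.univ.filter (fun j : Fin T => (j : ℕ) < k))
          (by simp [hpk]) (by simp [hqk])
      have heq : pre x k = pre z k := by
        refine Finset.sum_congr rfl ?_
        intro l hl
        simp only [Finset.mem_filter] at hl
        apply hlt_p
        have : (l : ℕ) < (p : ℕ) := by omega
        exact this
      omega
  exact ih _ hz'sq x z' le_rfl hx (by omega) hmaj' hz'real

/-- double counting: prefix sums of the conjugate partition -/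
lemma pre_conj {N T : ℕ} (r : Fin N → ℕ) (hrT : ∀ n, r n ≤ T) (k : ℕ) :
    pre (fun j : Fin T => (Finset.univ.filter (fun n : Fin N => (j : ℕ) + 1 ≤ r n)).card) k
      = ∑ n, min (r n) k := by
  classical
  unfold pre
  have step1 : ∀ j : Fin T,
      (Finset.univ.filter (fun n : Fin N => (j : ℕ) + 1 ≤ r n)).card
        = ∑ n, if (j : ℕ) + 1 ≤ r n then 1 else 0 := by
    intro j
    rw [Finset.sum_boole]
    simp
  calc ∑ j ∈ Finset.univ.filter (fun j : Fin T => (j : ℕ) < k),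
          (Finset.univ.filter (fun n : Fin N => (j : ℕ) + 1 ≤ r n)).card
      = ∑ j ∈ Finset.univ.filter (fun j : Fin T => (j : ℕ) < k),
          ∑ n, if (j : ℕ) + 1 ≤ r n then 1 else 0 :=
        Finset.sum_congr rfl (fun j _ => step1 j)
    _ = ∑ n, ∑ j ∈ Finset.univ.filter (fun j : Fin T => (j : ℕ) < k),
          (if (j : ℕ) + 1 ≤ r n then 1 else 0) := Finset.sum_comm
    _ = ∑ n, min (r n) k := by
        apply Finset.sum_congr rfl
        intro n _
        rw [Finset.sum_boole]
        simp only [Nat.cast_id]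
        have : (Finset.univ.filter (fun j : Fin T => (j : ℕ) < k)).filter
            (fun j : Fin T => (j : ℕ) + 1 ≤ r n)
            = Finset.univ.filter (fun j : Fin T => (j : ℕ) < min (r n) k) := by
          rw [Finset.filter_filter]
          apply Finset.filter_congr
          intro j _
          constructor
          · intro hj; omega
          · intro hj; omega
        rw [this, card_filter_lt (le_trans (min_le_left _ _) (hrT n))]

end GR

/-- Gale–Ryser: a (0,1)-matrix with row sums `r` and column sums `h` exists iff
`h` is majorized by the partition conjugate of `r`. -/
theorem gale_ryser (N T : ℕ) (h : Fin T → ℕ) (r : Fin N → ℕ)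
    (hrT : ∀ n, r n ≤ T) (hsum : ∑ j, h j = ∑ n, r n) :
    (∃ A : Fin N → Fin T → ℕ,
        (∀ n j, A n j ≤ 1) ∧
        (∀ n, ∑ j, A n j = r n) ∧
        (∀ j, ∑ n, A n j = h j)) ↔
      (∀ k, topSum h k ≤
        topSum (fun j : Fin T =>
          (Finset.univ.filter (fun n : Fin N => (j : ℕ) + 1 ≤ r n)).card) k) := by
  classical
  set rstar : Fin T → ℕ :=
    fun j => (Finset.univ.filter (fun n : Fin N => (j : ℕ) + 1 ≤ r n)).card with hrsdef
  constructor
  · rintro ⟨A, h1, h2, h3⟩ k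
    apply GR.topSum_le
    intro S hS
    have hbound : ∀ n, ∑ j ∈ S, A n j ≤ min (r n) k := by
      intro n
      apply le_min
      · rw [← h2 n]
        exact Finset.sum_le_sum_of_subset (Finset.subset_univ S)
      · calc ∑ j ∈ S, A n j ≤ ∑ _j ∈ S, 1 := Finset.sum_le_sum (fun j _ => h1 n j)
          _ = S.card := by simp
          _ ≤ k := hS
    calc ∑ j ∈ S, h j = ∑ j ∈ S, ∑ n, A n j := Finset.sum_congr rfl (fun j _ => (h3 j).symm)
      _ = ∑ n, ∑ j ∈ S, A n j := Finset.sum_comm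
      _ ≤ ∑ n, min (r n) k := Finset.sum_le_sum (fun n _ => hbound n)
      _ = GR.pre rstar k := (GR.pre_conj r hrT k).symm
      _ ≤ topSum rstar k := GR.pre_le_topSum rstar
  · intro hmaj
    have hrs_real : GR.isReal N T r rstar := GR.isReal_conj r hrT
    have hrs_sum : ∑ j, rstar j = ∑ j, h j := by
      have e1 : GR.pre rstar T = ∑ n, min (r n) T := GR.pre_conj r hrT T
      have e2 : GR.pre rstar T = ∑ j, rstar j := by
        unfold GR.pre
        apply Finset.sum_congr
        · apply Finset.filter_true_of_mem
          intro j _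
          exact j.isLt
        · intros; rfl
      have e3 : ∑ n, min (r n) T = ∑ n, r n :=
        Finset.sum_congr rfl (fun n _ => min_eq_left (hrT n))
      omega
    -- sort h descending
    set σ : Equiv.Perm (Fin T) := (Fin.revPerm).trans (Tuple.sort h) with hσdef
    set hs : Fin T → ℕ := h ∘ σ with hhs
    have hs_anti : ∀ i j : Fin T, i ≤ j → hs j ≤ hs i := by
      intro i j hij
      have hmono := Tuple.monotone_sort h
      exact hmono (Fin.rev_le_rev.mpr hij)
    have hs_sum : ∑ j, hs j = ∑ j, h j := Equiv.sum_comp σ h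
    have hs_top : ∀ k, topSum hs k = topSum h k := fun k => GR.topSum_comp_perm h σ
    have hs_real : GR.isReal N T r hs := by
      apply GR.chain r (∑ j, rstar j * rstar j) hs rstar le_rfl hs_anti (by omega)
        (fun k => (hs_top k).symm ▸ hmaj k) hrs_real
    have hback := GR.isReal_perm hs_real σ.symm
    have : hs ∘ σ.symm = h := by
      funext j
      simp [hhs]
    rw [this] at hback
    exact hback
end

section
/- Given h in N^T and r in N^N, the class of N×T (0,1)-matrices with row sum vector r and column sum vector h is nonempty if and only if ||h||_1 = ||r||_1 and for every k = 0, 1, ..., T, the sum over j > k of the (j-th smallest) entries h_[T], ..., h_[k+1] (i.e., the sum of the T−k smallest entries of h) is at least Σ_{n=1}^N [r_n − k]^+. -/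
open Finset

/-- Sufficiency half of Gale–Ryser, in subset form. -/
lemma gr_exists {α ι : Type*} [Fintype α] [DecidableEq α] [DecidableEq ι] (h : ι → ℕ) :
    ∀ (c : ℕ) (J : Finset ι) (r : α → ℕ), J.card = c →
    (∑ j ∈ J, h j = ∑ n, r n) →
    (∀ S ⊆ J, ∑ j ∈ S, h j ≤ ∑ n, min (r n) S.card) →
    ∃ B : ι → Finset α, (∀ j ∈ J, (B j).card = h j) ∧
      ∀ n, (J.filter fun j => n ∈ B j).card = r n := by
  intro c
  induction c with
  | zero =>
    intro J r hc hsum _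
    rw [Finset.card_eq_zero] at hc
    subst hc
    simp only [Finset.sum_empty] at hsum
    have hr : ∀ n, r n = 0 := by
      intro n
      have := Finset.sum_eq_zero_iff.mp hsum.symm
      exact this n (mem_univ n)
    exact ⟨fun _ => ∅, by simp, fun n => by simp [hr n]⟩
  | succ c ih =>
    intro J r hc hsum hcond
    -- pick column with max h
    have hJne : J.Nonempty := Finset.card_pos.mp (by omega)
    obtain ⟨j0, hj0J, hj0max⟩ := J.exists_max_image h hJne
    set m := h j0 with hm
    -- m ≤ number of rows with r ≥ 1
    have hP : m ≤ (univ.filter fun n => 1 ≤ r n).card := by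
      have h1 := hcond {j0} (by simpa using hj0J)
      simp only [Finset.sum_singleton, Finset.card_singleton] at h1
      calc m ≤ ∑ n, min (r n) 1 := h1
        _ = ∑ n ∈ univ.filter fun n => 1 ≤ r n, 1 := by
            rw [Finset.sum_filter]
            apply Finset.sum_congr rfl
            intro n _
            split <;> omega
        _ = _ := by rw [Finset.sum_const, smul_eq_mul, mul_one]
    -- choose R of card m maximizing ∑ r over subsets of P
    set P := univ.filter fun n => 1 ≤ r n with hPdef
    obtain ⟨R0, hR0P, hR0card⟩ := Finset.exists_subset_card_eq hP
    have hCne : (P.powerset.filter fun R => R.card = m).Nonempty :=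
      ⟨R0, by simp [Finset.mem_powerset, hR0P, hR0card]⟩
    obtain ⟨R, hRmem, hRmax⟩ :=
      (P.powerset.filter fun R => R.card = m).exists_max_image (fun R => ∑ n ∈ R, r n) hCne
    simp only [Finset.mem_filter, Finset.mem_powerset] at hRmem
    obtain ⟨hRP, hRcard⟩ := hRmem
    have hR1 : ∀ n ∈ R, 1 ≤ r n := by
      intro n hn
      have := hRP hn
      simp only [hPdef, Finset.mem_filter] at this
      exact this.2
    -- top property
    have htop : ∀ p ∈ R, ∀ q, q ∉ R → r q ≤ r p := by
      intro p hp q hq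
      by_contra hlt
      push_neg at hlt
      have hqP : q ∈ P := by
        simp only [hPdef, Finset.mem_filter]
        exact ⟨mem_univ q, by omega⟩
      have hq' : q ∉ R.erase p := fun hmem => hq (Finset.mem_of_mem_erase hmem)
      have hcard' : (insert q (R.erase p)).card = m := by
        rw [Finset.card_insert_of_notMem hq', Finset.card_erase_of_mem hp, hRcard]
        have : 1 ≤ R.card := Finset.card_pos.mpr ⟨p, hp⟩
        omega
      have hsub' : insert q (R.erase p) ⊆ P :=
        Finset.insert_subset hqP ((R.erase_subset p).trans hRP)
      have hle := hRmax (insert q (R.erase p)) (by simp [Finset.mem_powerset, hsub', hcard'])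
      rw [Finset.sum_insert hq'] at hle
      have hsplit : r p + ∑ n ∈ R.erase p, r n = ∑ n ∈ R, r n :=
        Finset.add_sum_erase R r hp
      omega
    -- new row sums
    set r' : α → ℕ := fun n => if n ∈ R then r n - 1 else r n with hr'def
    have hindsum : ∑ n, (if n ∈ R then (1:ℕ) else 0) = m := by
      rw [Finset.sum_ite_mem, Finset.univ_inter, Finset.sum_const, smul_eq_mul, mul_one, hRcard]
    have hsum' : ∑ j ∈ J.erase j0, h j = ∑ n, r' n := by
      have h1 : h j0 + ∑ j ∈ J.erase j0, h j = ∑ j ∈ J, h j :=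
        Finset.add_sum_erase J h hj0J
      have h2 : ∑ n, (r' n + if n ∈ R then 1 else 0) = ∑ n, r n := by
        apply Finset.sum_congr rfl
        intro n _
        by_cases hn : n ∈ R
        · have := hR1 n hn
          simp [hr'def, hn]; omega
        · simp [hr'def, hn]
      rw [Finset.sum_add_distrib, hindsum] at h2
      omega
    have hcond' : ∀ S ⊆ J.erase j0, ∑ j ∈ S, h j ≤ ∑ n, min (r' n) S.card := by
      intro S hS
      set k := S.card with hk
      have hSJ : S ⊆ J := hS.trans (J.erase_subset j0)
      by_cases hA : ∀ p ∈ R, k < r p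
      · have : ∑ n, min (r' n) k = ∑ n, min (r n) k := by
          apply Finset.sum_congr rfl
          intro n _
          by_cases hn : n ∈ R
          · have := hA n hn; simp [hr'def, hn]; omega
          · simp [hr'def, hn]
        rw [this]
        exact hcond S hSJ
      · push_neg at hA
        obtain ⟨n1, hn1R, hn1⟩ := hA
        have hj0S : j0 ∉ S := fun hmem => (Finset.mem_erase.mp (hS hmem)).1 rfl
        have hins : insert j0 S ⊆ J := Finset.insert_subset hj0J hSJ
        have hbig := hcond (insert j0 S) hins
        rw [Finset.sum_insert hj0S, Finset.card_insert_of_notMem hj0S, ← hk] at hbig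
        have hpt : ∀ n, min (r n) (k + 1) ≤ min (r' n) k + (if n ∈ R then 1 else 0) := by
          intro n
          by_cases hn : n ∈ R
          · simp [hr'def, hn]; omega
          · have hle : r n ≤ k := le_trans (htop n1 hn1R n hn) hn1
            simp [hr'def, hn]; omega
        have hsum2 : ∑ n, min (r n) (k + 1) ≤ ∑ n, min (r' n) k + m := by
          calc ∑ n, min (r n) (k + 1)
              ≤ ∑ n, (min (r' n) k + if n ∈ R then 1 else 0) :=
                Finset.sum_le_sum fun n _ => hpt n
            _ = ∑ n, min (r' n) k + m := by rw [Finset.sum_add_distrib, hindsum]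
        omega
    obtain ⟨B', hB'col, hB'row⟩ := ih (J.erase j0) r'
      (by rw [Finset.card_erase_of_mem hj0J, hc]; omega) hsum' hcond'
    refine ⟨fun j => if j = j0 then R else B' j, ?_, ?_⟩
    · intro j hjJ
      by_cases hj : j = j0
      · subst hj; simpa [hRcard] using hm
      · simp only [if_neg hj]
        exact hB'col j (Finset.mem_erase.mpr ⟨hj, hjJ⟩)
    · intro n
      have hJeq : insert j0 (J.erase j0) = J := Finset.insert_erase hj0J
      rw [← hJeq, Finset.filter_insert]
      have hfeq : ((J.erase j0).filter fun j => n ∈ if j = j0 then R else B' j)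
          = (J.erase j0).filter fun j => n ∈ B' j := by
        apply Finset.filter_congr
        intro j hj
        rw [if_neg (Finset.mem_erase.mp hj).1]
      by_cases hn : n ∈ R
      · rw [if_pos (by simp [hn])]
        rw [Finset.card_insert_of_notMem (fun hmem => (Finset.mem_erase.mp (Finset.mem_of_mem_filter _ hmem)).1 rfl)]
        rw [hfeq, hB'row n]
        have := hR1 n hn
        simp [hr'def, hn]; omega
      · rw [if_neg (by simp [hn])]
        rw [hfeq, hB'row n]
        simp [hr'def, hn]

lemma topSum_le_sum {T : ℕ} (h : Fin T → ℕ) (k : ℕ) : topSum h k ≤ ∑ j, h j := by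
  apply Finset.sup_le
  intro S _
  exact Finset.sum_le_sum_of_subset (Finset.subset_univ S)

lemma le_topSum {T : ℕ} (h : Fin T → ℕ) (k : ℕ) (S : Finset (Fin T)) (hS : S.card ≤ k) :
    ∑ j ∈ S, h j ≤ topSum h k :=
  Finset.le_sup (f := fun S => ∑ i ∈ S, h i)
    (by simp only [Finset.mem_filter, Finset.mem_powerset]; exact ⟨Finset.subset_univ S, hS⟩)

/-- First-order structure-tensor form of the Gale–Ryser condition: the class of `N × T`
(0,1)-matrices with row sums `r` and column sums `h` is nonempty iff the total sums agree
and, for every `k ≤ T`, the sum of the `T - k` smallest entries of `h` is at least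
`∑ n, [r n - k]⁺`. -/
theorem galeRyser_tensor (N T : ℕ) (h : Fin T → ℕ) (r : Fin N → ℕ) :
    (∃ A : Fin N → Fin T → ℕ,
        (∀ n j, A n j ≤ 1) ∧
        (∀ n, ∑ j, A n j = r n) ∧
        (∀ j, ∑ n, A n j = h j)) ↔
      ((∑ j, h j = ∑ n, r n) ∧
        ∀ k ≤ T, ∑ n, (r n - k) ≤ (∑ j, h j) - topSum h k) := by
  have hminsum : ∀ k : ℕ, ∑ n, min (r n) k + ∑ n, (r n - k) = ∑ n, r n := by
    intro k
    rw [← Finset.sum_add_distrib]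
    exact Finset.sum_congr rfl fun n _ => by omega
  -- equivalence of the tensor condition with the subset condition, given equal totals
  have hiff : (∑ j, h j = ∑ n, r n) →
      ((∀ k ≤ T, ∑ n, (r n - k) ≤ (∑ j, h j) - topSum h k) ↔
        (∀ S : Finset (Fin T), ∑ j ∈ S, h j ≤ ∑ n, min (r n) S.card)) := by
    intro hsum
    constructor
    · intro hk S
      have hcard : S.card ≤ T := by
        simpa using Finset.card_le_univ S
      have h1 := hk S.card hcard
      have h2 := le_topSum h S.card S le_rfl
      have h3 := topSum_le_sum h S.card
      have h4 := hminsum S.card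
      omega
    · intro hS k _
      have h1 : topSum h k ≤ ∑ n, min (r n) k := by
        apply Finset.sup_le
        intro S hSmem
        simp only [Finset.mem_filter] at hSmem
        calc ∑ j ∈ S, h j ≤ ∑ n, min (r n) S.card := hS S
          _ ≤ ∑ n, min (r n) k :=
            Finset.sum_le_sum fun n _ => le_min (min_le_left _ _)
              (le_trans (min_le_right _ _) hSmem.2)
      have h3 := topSum_le_sum h k
      have h4 := hminsum k
      omega
  constructor
  · rintro ⟨A, hA1, hArow, hAcol⟩
    have hsum : ∑ j, h j = ∑ n, r n := by
      calc ∑ j, h j = ∑ j, ∑ n, A n j := by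
            exact Finset.sum_congr rfl fun j _ => (hAcol j).symm
        _ = ∑ n, ∑ j, A n j := Finset.sum_comm
        _ = ∑ n, r n := Finset.sum_congr rfl fun n _ => hArow n
    refine ⟨hsum, (hiff hsum).mpr ?_⟩
    intro S
    calc ∑ j ∈ S, h j = ∑ j ∈ S, ∑ n, A n j :=
          Finset.sum_congr rfl fun j _ => (hAcol j).symm
      _ = ∑ n, ∑ j ∈ S, A n j := Finset.sum_comm
      _ ≤ ∑ n, min (r n) S.card := by
          apply Finset.sum_le_sum
          intro n _
          apply le_min
          · rw [← hArow n]
            exact Finset.sum_le_sum_of_subset (Finset.subset_univ S)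
          · calc ∑ j ∈ S, A n j ≤ ∑ j ∈ S, 1 :=
                Finset.sum_le_sum fun j _ => hA1 n j
              _ = S.card := by simp
  · rintro ⟨hsum, hk⟩
    have hScond := (hiff hsum).mp hk
    obtain ⟨B, hBcol, hBrow⟩ := gr_exists h T Finset.univ r (by simp) hsum
      (fun S _ => hScond S)
    refine ⟨fun n j => if n ∈ B j then 1 else 0, ?_, ?_, ?_⟩
    · intro n j; dsimp only; split <;> omega
    · intro n
      dsimp only
      rw [Finset.sum_boole]
      exact_mod_cast hBrow n
    · intro j
      rw [Finset.sum_ite_mem, Finset.univ_inter, Finset.sum_const, smul_eq_mul, mul_one]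
      exact hBcol j (Finset.mem_univ j)
end

section
/- Let F be an N×T (0,1)-matrix (pattern matrix), h in N^T, r in N^N with ||h||_1 = ||r||_1, and suppose F can be described by λ+1 special column indices 0 = T_0 < T_1 < ... < T_λ = T, meaning columns T_i+1 through T_{i+1} of F are all equal for each i, and suppose h is non-increasing within each block of columns (T_i, T_{i+1}]. Then there exists a (0,1)-matrix A of size N×T with row sums r, column sums h, and A ≤ F entrywise, if and only if for all choices of integers k_i with 0 ≤ k_i ≤ T_i − T_{i−1} (i = 1,...,λ): Σ_{i=1}^λ Σ_{j=T_{i−1}+k_i+1}^{T_i} h_j − Σ_{n=1}^N [r_n − Σ_{i=1}^λ k_i·F(n, T_i)]^+ ≥ 0. -/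
open Finset

namespace ZOC

/-- deficiency value of a set of columns `J`. -/
def fval (N T : ℕ) (h r : ℕ → ℕ) (F : ℕ → ℕ → ℕ) (J : Finset ℕ) : ℤ :=
  ∑ j ∈ J, (h j : ℤ)
    - ∑ n ∈ Icc 1 N, max ((r n : ℤ) - ∑ j ∈ Icc 1 T \ J, (F n j : ℤ)) 0

lemma fval_submodular (N T : ℕ) (h r : ℕ → ℕ) (F : ℕ → ℕ → ℕ) (J1 J2 : Finset ℕ) :
    fval N T h r F (J1 ∩ J2) + fval N T h r F (J1 ∪ J2)
      ≤ fval N T h r F J1 + fval N T h r F J2 := by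
  unfold fval
  have hh : ∑ j ∈ J1 ∩ J2, (h j : ℤ) + ∑ j ∈ J1 ∪ J2, (h j : ℤ)
      = ∑ j ∈ J1, (h j : ℤ) + ∑ j ∈ J2, (h j : ℤ) := by
    rw [add_comm]; exact Finset.sum_union_inter
  have hφ : ∀ n, max ((r n : ℤ) - ∑ j ∈ Icc 1 T \ J1, (F n j : ℤ)) 0
      + max ((r n : ℤ) - ∑ j ∈ Icc 1 T \ J2, (F n j : ℤ)) 0
      ≤ max ((r n : ℤ) - ∑ j ∈ Icc 1 T \ (J1 ∩ J2), (F n j : ℤ)) 0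
      + max ((r n : ℤ) - ∑ j ∈ Icc 1 T \ (J1 ∪ J2), (F n j : ℤ)) 0 := by
    intro n
    have e1 : Icc 1 T \ (J1 ∩ J2) = (Icc 1 T \ J1) ∪ (Icc 1 T \ J2) := sdiff_inf
    have e2 : Icc 1 T \ (J1 ∪ J2) = (Icc 1 T \ J1) ∩ (Icc 1 T \ J2) := sdiff_sup
    rw [e1, e2]
    set A := Icc 1 T \ J1
    set B := Icc 1 T \ J2
    have h1 : ∑ j ∈ A ∩ B, (F n j : ℤ) ≤ ∑ j ∈ A, (F n j : ℤ) :=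
      Finset.sum_le_sum_of_subset_of_nonneg inter_subset_left (fun j _ _ => by positivity)
    have h2 : ∑ j ∈ A ∩ B, (F n j : ℤ) ≤ ∑ j ∈ B, (F n j : ℤ) :=
      Finset.sum_le_sum_of_subset_of_nonneg inter_subset_right (fun j _ _ => by positivity)
    have h3 : ∑ j ∈ A ∪ B, (F n j : ℤ) + ∑ j ∈ A ∩ B, (F n j : ℤ)
        = ∑ j ∈ A, (F n j : ℤ) + ∑ j ∈ B, (F n j : ℤ) := Finset.sum_union_inter
    omega
  have key := Finset.sum_le_sum (s := Icc 1 N) (fun n _ => hφ n)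
  rw [Finset.sum_add_distrib, Finset.sum_add_distrib] at key
  omega

end ZOC

namespace ZOC2
open ZOC

theorem exists_matrix_aux (N T : ℕ) (s : ℕ) :
    ∀ (h r : ℕ → ℕ) (F : ℕ → ℕ → ℕ),
      (∀ n j, F n j ≤ 1) →
      (∑ j ∈ Icc 1 T, h j = ∑ n ∈ Icc 1 N, r n) →
      (∑ j ∈ Icc 1 T, h j = s) →
      (∀ J ⊆ Icc 1 T, 0 ≤ fval N T h r F J) →
      ∃ A : ℕ → ℕ → ℕ, (∀ n j, A n j ≤ F n j) ∧
        (∀ n ∈ Icc 1 N, ∑ j ∈ Icc 1 T, A n j = r n) ∧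
        (∀ j ∈ Icc 1 T, ∑ n ∈ Icc 1 N, A n j = h j) := by
  induction s with
  | zero =>
    intro h r F hF hsum hs _
    refine ⟨fun _ _ => 0, fun n j => Nat.zero_le _, ?_, ?_⟩
    · intro n hn
      have : r n = 0 := by
        have h0 : ∑ n ∈ Icc 1 N, r n = 0 := by omega
        exact (Finset.sum_eq_zero_iff.mp h0) n hn
      simp [this]
    · intro j hj
      have : h j = 0 := (Finset.sum_eq_zero_iff.mp hs) j hj
      simp [this]
  | succ s ih =>
    intro h r F hF hsum hs hcond
    -- pick a column with positive demand
    obtain ⟨j0, hj0c, hj0⟩ : ∃ j0 ∈ Icc 1 T, h j0 ≠ 0 :=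
      Finset.exists_ne_zero_of_sum_ne_zero (by omega)
    have hj0pos : 1 ≤ h j0 := Nat.one_le_iff_ne_zero.mpr hj0
    -- the family of tight sets containing j0
    set 𝒮 : Set (Finset ℕ) :=
      {J | J ⊆ Icc 1 T ∧ j0 ∈ J ∧ fval N T h r F J = 0} with h𝒮
    have hfull : (Icc 1 T) ∈ 𝒮 := by
      refine ⟨le_refl _, hj0c, ?_⟩
      unfold fval
      rw [sdiff_self]
      simp only [bot_eq_empty, Finset.sum_empty, sub_zero]
      have : ∀ n ∈ Icc 1 N, max ((r n : ℤ)) 0 = (r n : ℤ) := by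
        intro n _; exact max_eq_left (by positivity)
      rw [Finset.sum_congr rfl this]
      have hz := congrArg (Nat.cast : ℕ → ℤ) hsum
      push_cast at hz
      omega
    have hclosed : ∀ J1 ∈ 𝒮, ∀ J2 ∈ 𝒮, J1 ⊓ J2 ∈ 𝒮 := by
      intro J1 h1 J2 h2
      obtain ⟨h1c, h1j, h1f⟩ := h1
      obtain ⟨h2c, h2j, h2f⟩ := h2
      have hsub := fval_submodular N T h r F J1 J2
      have hi : 0 ≤ fval N T h r F (J1 ∩ J2) :=
        hcond _ (le_trans inter_subset_left h1c)
      have hu : 0 ≤ fval N T h r F (J1 ∪ J2) :=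
        hcond _ (union_subset h1c h2c)
      rw [inf_eq_inter]
      exact ⟨le_trans inter_subset_left h1c, Finset.mem_inter.mpr ⟨h1j, h2j⟩, by omega⟩
    classical
    set 𝒯 : Finset (Finset ℕ) :=
      (Icc 1 T).powerset.filter (fun J => J ∈ 𝒮) with h𝒯
    have h𝒯ne : 𝒯.Nonempty :=
      ⟨Icc 1 T, by simp [h𝒯, Finset.mem_filter, Finset.mem_powerset, hfull]⟩
    set Jstar : Finset ℕ := 𝒯.inf' h𝒯ne id with hJstar
    have hJstarmem : Jstar ∈ 𝒮 := by
      apply Finset.inf'_mem 𝒮 hclosed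
      intro J hJ
      exact (Finset.mem_filter.mp hJ).2
    obtain ⟨hJsc, hJsj0, hJsf⟩ := hJstarmem
    have hJsmin : ∀ J, J ⊆ Icc 1 T → j0 ∈ J → fval N T h r F J = 0 → Jstar ⊆ J := by
      intro J hc hj hf
      exact Finset.inf'_le id
        (Finset.mem_filter.mpr ⟨Finset.mem_powerset.mpr hc, ⟨hc, hj, hf⟩⟩)
    clear_value Jstar
    clear hJstar
    -- find the pivot row n0
    have hcompl : Icc 1 T \ (Jstar.erase j0) = insert j0 (Icc 1 T \ Jstar) := by
      ext a
      simp only [Finset.mem_sdiff, Finset.mem_erase, Finset.mem_insert]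
      by_cases ha : a = j0
      · subst ha; simp [hj0c, hJsj0]
      · simp only [ha, false_and, not_false_iff, true_and, false_or]
        tauto
    have hj0notin : j0 ∉ Icc 1 T \ Jstar := by simp [hJsj0]
    have herase_cond := hcond (Jstar.erase j0) (le_trans (Finset.erase_subset _ _) hJsc)
    have hsum_erase : ∑ j ∈ Jstar.erase j0, (h j : ℤ) = ∑ j ∈ Jstar, (h j : ℤ) - (h j0 : ℤ) := by
      rw [← Finset.sum_erase_add Jstar _ hJsj0]; ring
    have hkey : (h j0 : ℤ) ≤ ∑ n ∈ Icc 1 N,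
        (max ((r n : ℤ) - ∑ j ∈ Icc 1 T \ Jstar, (F n j : ℤ)) 0
          - max ((r n : ℤ) - (F n j0 : ℤ) - ∑ j ∈ Icc 1 T \ Jstar, (F n j : ℤ)) 0) := by
      have e1 : fval N T h r F (Jstar.erase j0)
          = ∑ j ∈ Jstar, (h j : ℤ) - (h j0 : ℤ)
            - ∑ n ∈ Icc 1 N,
                max ((r n : ℤ) - (F n j0 : ℤ) - ∑ j ∈ Icc 1 T \ Jstar, (F n j : ℤ)) 0 := by
        unfold fval
        rw [hsum_erase, hcompl]
        rw [Finset.sum_congr rfl (fun n (_ : n ∈ Icc 1 N) => by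
          rw [Finset.sum_insert hj0notin, sub_add_eq_sub_sub])]
      have e0 : fval N T h r F Jstar
          = ∑ j ∈ Jstar, (h j : ℤ)
            - ∑ n ∈ Icc 1 N, max ((r n : ℤ) - ∑ j ∈ Icc 1 T \ Jstar, (F n j : ℤ)) 0 := by
        unfold fval; rfl
      rw [Finset.sum_sub_distrib]
      omega
    obtain ⟨n0, hn0r, hn0d⟩ : ∃ n0 ∈ Icc 1 N,
        0 < max ((r n0 : ℤ) - ∑ j ∈ Icc 1 T \ Jstar, (F n0 j : ℤ)) 0
          - max ((r n0 : ℤ) - (F n0 j0 : ℤ) - ∑ j ∈ Icc 1 T \ Jstar, (F n0 j : ℤ)) 0 := by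
      by_contra hcon
      push_neg at hcon
      have hsn : ∑ n ∈ Icc 1 N,
          (max ((r n : ℤ) - ∑ j ∈ Icc 1 T \ Jstar, (F n j : ℤ)) 0
            - max ((r n : ℤ) - (F n j0 : ℤ) - ∑ j ∈ Icc 1 T \ Jstar, (F n j : ℤ)) 0) ≤ 0 :=
        Finset.sum_nonpos hcon
      have : (1:ℤ) ≤ (h j0 : ℤ) := by exact_mod_cast hj0pos
      omega
    have hcs0 : (0:ℤ) ≤ ∑ j ∈ Icc 1 T \ Jstar, (F n0 j : ℤ) :=
      Finset.sum_nonneg (fun j _ => by positivity)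
    have hFn0 : F n0 j0 = 1 := by
      have h01 : F n0 j0 = 0 ∨ F n0 j0 = 1 := by have := hF n0 j0; omega
      rcases h01 with h0 | h1
      · rw [h0] at hn0d; push_cast at hn0d; omega
      · exact h1
    rw [hFn0] at hn0d; push_cast at hn0d
    have hrn0 : (1:ℤ) ≤ (r n0 : ℤ) - ∑ j ∈ Icc 1 T \ Jstar, (F n0 j : ℤ) := by omega
    have hrn0ge1 : 1 ≤ r n0 := by
      have : (1:ℤ) ≤ (r n0 : ℤ) := by omega
      exact_mod_cast this
    -- updated data
    set h' : ℕ → ℕ := Function.update h j0 (h j0 - 1) with hh'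
    set r' : ℕ → ℕ := Function.update r n0 (r n0 - 1) with hr'
    set F' : ℕ → ℕ → ℕ := fun n j => if n = n0 ∧ j = j0 then 0 else F n j with hF'def
    have hcast_h' : ∀ j, (h' j : ℤ) = (h j : ℤ) - (if j = j0 then 1 else 0) := by
      intro j
      by_cases hj : j = j0
      · subst hj
        rw [hh', Function.update_self, if_pos rfl, Nat.cast_sub hj0pos]
        norm_num
      · rw [hh', Function.update_of_ne hj, if_neg hj, sub_zero]
    have hcast_r' : ∀ n, (r' n : ℤ) = (r n : ℤ) - (if n = n0 then 1 else 0) := by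
      intro n
      by_cases hn : n = n0
      · subst hn
        rw [hr', Function.update_self, if_pos rfl, Nat.cast_sub hrn0ge1]
        norm_num
      · rw [hr', Function.update_of_ne hn, if_neg hn, sub_zero]
    have hF'elem : ∀ n j, (F' n j : ℤ) = (F n j : ℤ) - (if n = n0 ∧ j = j0 then 1 else 0) := by
      intro n j
      simp only [hF'def]
      by_cases hc : n = n0 ∧ j = j0
      · obtain ⟨hn, hj⟩ := hc; subst hn; subst hj
        simp [hFn0]
      · rw [if_neg hc, if_neg hc, sub_zero]
    have hF'le : ∀ n j, F' n j ≤ 1 := by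
      intro n j
      simp only [hF'def]
      by_cases hc : n = n0 ∧ j = j0
      · rw [if_pos hc]; omega
      · rw [if_neg hc]; exact hF n j
    have hcast_F' : ∀ n (S : Finset ℕ), ∑ j ∈ S, (F' n j : ℤ)
        = ∑ j ∈ S, (F n j : ℤ) - (if n = n0 ∧ j0 ∈ S then 1 else 0) := by
      intro n S
      rw [Finset.sum_congr rfl (fun j (_ : j ∈ S) => hF'elem n j), Finset.sum_sub_distrib]
      congr 1
      by_cases hn : n = n0
      · subst hn
        simp only [true_and]
        rw [Finset.sum_ite_eq' S j0 (fun _ => (1:ℤ))]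
      · simp [hn]
    have hsub_h : ∑ j ∈ Icc 1 T, h' j = s := by
      rw [hh', Finset.sum_update_of_mem hj0c, Finset.sdiff_singleton_eq_erase]
      have h2 := Finset.sum_erase_add (Icc 1 T) h hj0c
      omega
    have hsub_r : ∑ n ∈ Icc 1 N, r' n = s := by
      rw [hr', Finset.sum_update_of_mem hn0r, Finset.sdiff_singleton_eq_erase]
      have h2 := Finset.sum_erase_add (Icc 1 N) r hn0r
      omega
    have hcond' : ∀ J ⊆ Icc 1 T, 0 ≤ fval N T h' r' F' J := by
      intro J hJ
      have hJ0 := hcond J hJ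
      have hhpart : ∑ j ∈ J, (h' j : ℤ) = ∑ j ∈ J, (h j : ℤ) - (if j0 ∈ J then 1 else 0) := by
        rw [Finset.sum_congr rfl (fun j (_ : j ∈ J) => hcast_h' j), Finset.sum_sub_distrib,
          Finset.sum_ite_eq' J j0 (fun _ => (1:ℤ))]
      have hterm : ∀ n ∈ Icc 1 N, n ≠ n0 →
          max ((r' n : ℤ) - ∑ j ∈ Icc 1 T \ J, (F' n j : ℤ)) 0
            - max ((r n : ℤ) - ∑ j ∈ Icc 1 T \ J, (F n j : ℤ)) 0 = 0 := by
        intro n _ hn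
        rw [hcast_F' n, hcast_r' n]
        simp [hn]
      have hj0mem : j0 ∈ Icc 1 T \ J ↔ j0 ∉ J := by simp [hj0c]
      have hsplit : ∑ n ∈ Icc 1 N, max ((r' n : ℤ) - ∑ j ∈ Icc 1 T \ J, (F' n j : ℤ)) 0
          - ∑ n ∈ Icc 1 N, max ((r n : ℤ) - ∑ j ∈ Icc 1 T \ J, (F n j : ℤ)) 0
          = max ((r n0 : ℤ) - 1 - (∑ j ∈ Icc 1 T \ J, (F n0 j : ℤ)
              - (if j0 ∈ J then 0 else 1))) 0
            - max ((r n0 : ℤ) - ∑ j ∈ Icc 1 T \ J, (F n0 j : ℤ)) 0 := by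
        rw [← Finset.sum_sub_distrib,
          Finset.sum_eq_single_of_mem n0 hn0r (fun n hn hne => hterm n hn hne)]
        rw [hcast_F' n0, hcast_r' n0, if_pos rfl]
        by_cases hjJ : j0 ∈ J
        · rw [if_neg (by simp [hj0mem, hjJ]), if_pos hjJ]
          try norm_num
        · rw [if_pos (by simp [hj0mem, hjJ]), if_neg hjJ]
          try norm_num
      by_cases hjJ : j0 ∈ J
      · -- the interesting case
        have halt : 1 ≤ (r n0 : ℤ) - ∑ j ∈ Icc 1 T \ J, (F n0 j : ℤ)
            ∨ 1 ≤ fval N T h r F J := by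
          by_cases hx : 1 ≤ (r n0 : ℤ) - ∑ j ∈ Icc 1 T \ J, (F n0 j : ℤ)
          · exact Or.inl hx
          · right
            rcases eq_or_lt_of_le hJ0 with heq | hlt
            · exfalso
              have hsubJ := hJsmin J hJ hjJ heq.symm
              have hmon : ∑ j ∈ Icc 1 T \ J, (F n0 j : ℤ)
                  ≤ ∑ j ∈ Icc 1 T \ Jstar, (F n0 j : ℤ) :=
                Finset.sum_le_sum_of_subset_of_nonneg
                  (Finset.sdiff_subset_sdiff (le_refl _) hsubJ)
                  (fun _ _ _ => by positivity)
              omega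
            · omega
        unfold fval at hJ0 halt ⊢
        rw [hhpart, if_pos hjJ]
        rw [if_pos hjJ] at hsplit
        omega
      · unfold fval at hJ0 ⊢
        rw [hhpart, if_neg hjJ]
        rw [if_neg hjJ] at hsplit
        omega
    obtain ⟨A', hA'le, hA'row, hA'col⟩ := ih h' r' F' hF'le (hsub_h.trans hsub_r.symm) hsub_h hcond'
    refine ⟨fun n j => A' n j + (if n = n0 ∧ j = j0 then 1 else 0), ?_, ?_, ?_⟩
    · intro n j
      beta_reduce
      by_cases hc : n = n0 ∧ j = j0
      · have h1 := hA'le n j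
        simp only [hF'def] at h1
        rw [if_pos hc] at h1
        rw [if_pos hc]
        rw [hc.1, hc.2] at h1 ⊢
        omega
      · rw [if_neg hc]
        have h1 := hA'le n j
        simp only [hF'def] at h1
        rw [if_neg hc] at h1
        omega
    · intro n hn
      beta_reduce
      rw [Finset.sum_add_distrib, hA'row n hn]
      by_cases hnn : n = n0
      · have e1 : ∑ j ∈ Icc 1 T, (if n = n0 ∧ j = j0 then 1 else 0) = 1 := by
          simp only [hnn, true_and]
          rw [Finset.sum_ite_eq' (Icc 1 T) j0 (fun _ => 1), if_pos hj0c]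
        rw [e1, hr', hnn, Function.update_self]
        omega
      · have : ∑ j ∈ Icc 1 T, (if n = n0 ∧ j = j0 then 1 else 0) = 0 := by
          simp [hnn]
        rw [this, hr', Function.update_of_ne hnn]
        omega
    · intro j hj
      beta_reduce
      rw [Finset.sum_add_distrib, hA'col j hj]
      by_cases hjj : j = j0
      · have e1 : ∑ n ∈ Icc 1 N, (if n = n0 ∧ j = j0 then 1 else 0) = 1 := by
          simp only [hjj, and_true]
          rw [Finset.sum_ite_eq' (Icc 1 N) n0 (fun _ => 1), if_pos hn0r]
        rw [e1, hh', hjj, Function.update_self]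
        omega
      · have : ∑ n ∈ Icc 1 N, (if n = n0 ∧ j = j0 then 1 else 0) = 0 := by
          simp [hjj]
        rw [this, hh', Function.update_of_ne hjj]
        omega


theorem exists_matrix (N T : ℕ) (h r : ℕ → ℕ) (F : ℕ → ℕ → ℕ)
    (hF : ∀ n j, F n j ≤ 1)
    (hsum : ∑ j ∈ Icc 1 T, h j = ∑ n ∈ Icc 1 N, r n)
    (hcond : ∀ J ⊆ Icc 1 T, 0 ≤ fval N T h r F J) :
    ∃ A : ℕ → ℕ → ℕ, (∀ n j, A n j ≤ F n j) ∧
      (∀ n ∈ Icc 1 N, ∑ j ∈ Icc 1 T, A n j = r n) ∧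
      (∀ j ∈ Icc 1 T, ∑ n ∈ Icc 1 N, A n j = h j) :=
  exists_matrix_aux N T (∑ j ∈ Icc 1 T, h j) h r F hF hsum rfl hcond

theorem fval_nonneg_of_exists (N T : ℕ) (h r : ℕ → ℕ) (F : ℕ → ℕ → ℕ)
    (A : ℕ → ℕ → ℕ) (hAle : ∀ n j, A n j ≤ F n j)
    (hArow : ∀ n ∈ Icc 1 N, ∑ j ∈ Icc 1 T, A n j = r n)
    (hAcol : ∀ j ∈ Icc 1 T, ∑ n ∈ Icc 1 N, A n j = h j)
    (J : Finset ℕ) (hJ : J ⊆ Icc 1 T) :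
    0 ≤ fval N T h r F J := by
  unfold fval
  have hcol : ∑ j ∈ J, (h j : ℤ) = ∑ j ∈ J, ∑ n ∈ Icc 1 N, (A n j : ℤ) := by
    refine Finset.sum_congr rfl (fun j hj => ?_)
    rw [← hAcol j (hJ hj)]
    push_cast
    rfl
  rw [hcol, Finset.sum_comm]
  have hterm : ∀ n ∈ Icc 1 N, max ((r n : ℤ) - ∑ j ∈ Icc 1 T \ J, (F n j : ℤ)) 0
      ≤ ∑ j ∈ J, (A n j : ℤ) := by
    intro n hn
    have hsplit : ∑ j ∈ J, (A n j : ℤ) + ∑ j ∈ Icc 1 T \ J, (A n j : ℤ) = (r n : ℤ) := by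
      rw [← Finset.sum_union (Finset.disjoint_sdiff), Finset.union_sdiff_of_subset hJ,
        ← hArow n hn]
      push_cast
      rfl
    have h1 : ∑ j ∈ Icc 1 T \ J, (A n j : ℤ) ≤ ∑ j ∈ Icc 1 T \ J, (F n j : ℤ) :=
      Finset.sum_le_sum (fun j _ => by exact_mod_cast hAle n j)
    have h2 : (0:ℤ) ≤ ∑ j ∈ J, (A n j : ℤ) := Finset.sum_nonneg (fun j _ => by positivity)
    omega
  have := Finset.sum_le_sum hterm
  omega

end ZOC2

namespace ZOCB

lemma ts_mono (lam : ℕ) (Ts : ℕ → ℕ) (hTs : ∀ i < lam, Ts i ≤ Ts (i + 1)) :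
    ∀ i i', i ≤ i' → i' ≤ lam → Ts i ≤ Ts i' := by
  intro i i'
  induction i' with
  | zero => intro h1 _; rw [Nat.le_zero.mp h1]
  | succ m ihm =>
    intro h1 h2
    rcases Nat.lt_or_ge i (m + 1) with hlt | hge
    · exact le_trans (ihm (by omega) (by omega)) (hTs m (by omega))
    · have : i = m + 1 := by omega
      rw [this]

lemma sum_blocks {M : Type*} [AddCommMonoid M] (lam : ℕ) (Ts : ℕ → ℕ)
    (hTs : ∀ i < lam, Ts i ≤ Ts (i + 1)) (g : ℕ → M) :
    ∑ j ∈ Ioc (Ts 0) (Ts lam), g j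
      = ∑ i ∈ Icc 1 lam, ∑ j ∈ Ioc (Ts (i - 1)) (Ts i), g j := by
  induction lam with
  | zero => simp
  | succ m ihm =>
    have hmono := ts_mono (m + 1) Ts hTs
    have h1 : ∑ j ∈ Ioc (Ts 0) (Ts m), g j + ∑ j ∈ Ioc (Ts m) (Ts (m + 1)), g j
        = ∑ j ∈ Ioc (Ts 0) (Ts (m + 1)), g j :=
      Finset.sum_Ioc_consecutive g (hmono 0 m (by omega) (by omega)) (hTs m (by omega))
    rw [← h1, ihm (fun i hi => hTs i (by omega)), Finset.sum_Icc_succ_top (by omega)]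
    simp

/-- sum over the last `t` elements of a block is minimal among `t`-subsets,
for `h` antitone on the block -/
lemma tail_sum_le (h : ℕ → ℕ) (a : ℕ) :
    ∀ b (S : Finset ℕ), S ⊆ Ioc a b →
      (∀ j j', a < j → j ≤ j' → j' ≤ b → h j' ≤ h j) →
      ∑ j ∈ Ioc (b - S.card) b, (h j : ℤ) ≤ ∑ j ∈ S, (h j : ℤ) := by
  intro b
  induction b with
  | zero =>
    intro S hS _
    have : S = ∅ := Finset.subset_empty.mp (by simpa using hS)
    simp [this]
  | succ b ihb =>
    intro S hS hmono
    by_cases hbS : (b + 1) ∈ S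
    · have hS' : S.erase (b + 1) ⊆ Ioc a b := by
        intro x hx
        have hx1 := hS (Finset.erase_subset _ _ hx)
        rw [Finset.mem_Ioc] at hx1 ⊢
        have hxne := Finset.ne_of_mem_erase hx
        omega
      have ih := ihb (S.erase (b + 1)) hS'
        (fun j j' hj hjj' hj' => hmono j j' hj hjj' (by omega))
      have hcard : (S.erase (b + 1)).card = S.card - 1 := Finset.card_erase_of_mem hbS
      have hcardpos : 1 ≤ S.card := Finset.card_pos.mpr ⟨_, hbS⟩
      have hle : b + 1 - S.card ≤ b := by omega
      rw [Finset.sum_Ioc_succ_top hle]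
      have heq : b + 1 - S.card = b - (S.erase (b + 1)).card := by omega
      rw [heq]
      have hsplit : ∑ j ∈ S.erase (b + 1), (h j : ℤ) + (h (b + 1) : ℤ)
          = ∑ j ∈ S, (h j : ℤ) := Finset.sum_erase_add S _ hbS
      omega
    · have hS' : S ⊆ Ioc a b := by
        intro x hx
        have hx1 := hS hx
        rw [Finset.mem_Ioc] at hx1 ⊢
        have : x ≠ b + 1 := fun hc => hbS (hc ▸ hx)
        omega
      have ih := ihb S hS' (fun j j' hj hjj' hj' => hmono j j' hj hjj' (by omega))
      rcases Nat.eq_zero_or_pos S.card with h0 | hpos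
      · rw [h0, Finset.card_eq_zero.mp h0]
        simp
      · have hcard_le : S.card ≤ b - a := by
          have := Finset.card_le_card hS'
          rwa [Nat.card_Ioc] at this
      -- shift the interval down by one
        have hshift : ∑ j ∈ Ioc (b + 1 - S.card) (b + 1), (h j : ℤ)
            = ∑ j ∈ Ioc (b - S.card) b, (h (j + 1) : ℤ) := by
          have hmap : (Ioc (b - S.card) b).map (addRightEmbedding 1)
              = Ioc (b + 1 - S.card) (b + 1) := by
            rw [Finset.map_add_right_Ioc]
            congr 1
            omega
          rw [← hmap, Finset.sum_map]
          rfl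
        rw [hshift]
        have hterm : ∀ j ∈ Ioc (b - S.card) b, (h (j + 1) : ℤ) ≤ (h j : ℤ) := by
          intro j hj
          rw [Finset.mem_Ioc] at hj
          have : a < j := by omega
          exact_mod_cast hmono j (j + 1) this (by omega) (by omega)
        exact le_trans (Finset.sum_le_sum hterm) ih

end ZOCB

section Final

open ZOC ZOC2 ZOCB

variable (N T lam : ℕ) (Ts : ℕ → ℕ) (h r : ℕ → ℕ) (F : ℕ → ℕ → ℕ)

/-- the canonical "tails" column set attached to a choice of `k`. -/
def Jk (lam : ℕ) (Ts : ℕ → ℕ) (k : ℕ → ℕ) : Finset ℕ :=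
  (Icc 1 lam).biUnion (fun i => Ioc (Ts (i - 1) + k i) (Ts i))

lemma disj_tails (lam : ℕ) (Ts : ℕ → ℕ) (hTs : ∀ i < lam, Ts i ≤ Ts (i + 1)) (k : ℕ → ℕ) :
    (↑(Icc 1 lam) : Set ℕ).PairwiseDisjoint (fun i => Ioc (Ts (i - 1) + k i) (Ts i)) := by
  intro i hi i' hi' hne
  simp only [Finset.coe_Icc, Set.mem_Icc] at hi hi'
  rw [Function.onFun, Finset.disjoint_left]
  intro x hx hx'
  rw [Finset.mem_Ioc] at hx hx'
  rcases Nat.lt_or_ge i i' with hlt | hge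
  · have := ts_mono lam Ts hTs i (i' - 1) (by omega) (by omega)
    omega
  · have hgt : i' < i := by omega
    have := ts_mono lam Ts hTs i' (i - 1) (by omega) (by omega)
    omega

lemma Jk_subset (lam : ℕ) (Ts : ℕ → ℕ) (T : ℕ) (hTs : ∀ i < lam, Ts i ≤ Ts (i + 1))
    (hTsT : Ts lam = T) (k : ℕ → ℕ) : Jk lam Ts k ⊆ Icc 1 T := by
  intro x hx
  rw [Jk, Finset.mem_biUnion] at hx
  obtain ⟨i, hi, hxi⟩ := hx
  rw [Finset.mem_Icc] at hi
  rw [Finset.mem_Ioc] at hxi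
  have := ts_mono lam Ts hTs i lam (by omega) (by omega)
  rw [Finset.mem_Icc]
  omega

lemma sum_Jk (lam : ℕ) (Ts : ℕ → ℕ) (hTs : ∀ i < lam, Ts i ≤ Ts (i + 1)) (k : ℕ → ℕ)
    (g : ℕ → ℤ) :
    ∑ j ∈ Jk lam Ts k, g j
      = ∑ i ∈ Icc 1 lam, ∑ j ∈ Ioc (Ts (i - 1) + k i) (Ts i), g j := by
  rw [Jk, Finset.sum_biUnion (disj_tails lam Ts hTs k)]

lemma block_sdiff_Jk (lam : ℕ) (Ts : ℕ → ℕ) (hTs : ∀ i < lam, Ts i ≤ Ts (i + 1))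
    (k : ℕ → ℕ) (hk : ∀ i, 1 ≤ i → i ≤ lam → k i ≤ Ts i - Ts (i - 1))
    (i : ℕ) (hi1 : 1 ≤ i) (hi2 : i ≤ lam) :
    Ioc (Ts (i - 1)) (Ts i) \ Jk lam Ts k = Ioc (Ts (i - 1)) (Ts (i - 1) + k i) := by
  have hki := hk i hi1 hi2
  have hTsi : Ts (i - 1) ≤ Ts i := ts_mono lam Ts hTs (i - 1) i (by omega) (by omega)
  ext x
  constructor
  · intro hx
    rw [Finset.mem_sdiff] at hx
    obtain ⟨hxb, hxn⟩ := hx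
    rw [Finset.mem_Ioc] at hxb ⊢
    refine ⟨hxb.1, ?_⟩
    by_contra hgt
    push_neg at hgt
    apply hxn
    rw [Jk, Finset.mem_biUnion]
    exact ⟨i, Finset.mem_Icc.mpr ⟨hi1, hi2⟩, Finset.mem_Ioc.mpr ⟨by omega, hxb.2⟩⟩
  · intro hx
    rw [Finset.mem_Ioc] at hx
    rw [Finset.mem_sdiff, Finset.mem_Ioc]
    refine ⟨⟨hx.1, by omega⟩, ?_⟩
    intro hmem
    rw [Jk, Finset.mem_biUnion] at hmem
    obtain ⟨i', hi', hx'⟩ := hmem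
    rw [Finset.mem_Icc] at hi'
    rw [Finset.mem_Ioc] at hx'
    rcases eq_or_ne i' i with rfl | hne
    · omega
    · rcases Nat.lt_or_ge i' i with hlt | hge
      · have := ts_mono lam Ts hTs i' (i - 1) (by omega) (by omega)
        omega
      · have := ts_mono lam Ts hTs i (i' - 1) (by omega) (by omega)
        omega

lemma sum_const_block (lam : ℕ) (Ts : ℕ → ℕ) (F : ℕ → ℕ → ℕ)
    (hblock : ∀ i, 1 ≤ i → i ≤ lam → ∀ j, Ts (i - 1) < j → j ≤ Ts i →
      ∀ n, F n j = F n (Ts i))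
    (i : ℕ) (hi1 : 1 ≤ i) (hi2 : i ≤ lam) (n : ℕ) (S : Finset ℕ)
    (hS : S ⊆ Ioc (Ts (i - 1)) (Ts i)) :
    ∑ j ∈ S, (F n j : ℤ) = (S.card : ℤ) * (F n (Ts i) : ℤ) := by
  have : ∀ j ∈ S, (F n j : ℤ) = (F n (Ts i) : ℤ) := by
    intro j hj
    have hj' := hS hj
    rw [Finset.mem_Ioc] at hj'
    rw [hblock i hi1 hi2 j hj'.1 hj'.2 n]
  rw [Finset.sum_congr rfl this, Finset.sum_const, nsmul_eq_mul]

/-- complement sums over the pattern matrix, via the block partition -/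
lemma compl_sum (lam T : ℕ) (Ts : ℕ → ℕ) (F : ℕ → ℕ → ℕ)
    (hTs : ∀ i < lam, Ts i ≤ Ts (i + 1)) (hTs0 : Ts 0 = 0) (hTsT : Ts lam = T)
    (hblock : ∀ i, 1 ≤ i → i ≤ lam → ∀ j, Ts (i - 1) < j → j ≤ Ts i →
      ∀ n, F n j = F n (Ts i))
    (J : Finset ℕ) (n : ℕ) :
    ∑ j ∈ Icc 1 T \ J, (F n j : ℤ)
      = ∑ i ∈ Icc 1 lam, ((Ioc (Ts (i - 1)) (Ts i) \ J).card : ℤ) * (F n (Ts i) : ℤ) := by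
  have h1 : Icc 1 T \ J = (Icc 1 T).filter (fun j => j ∉ J) := by
    rw [Finset.sdiff_eq_filter]
  rw [h1, Finset.sum_filter]
  have h2 : Icc 1 T = Ioc (Ts 0) (Ts lam) := by
    rw [hTs0, hTsT, ← Finset.Icc_add_one_left_eq_Ioc, zero_add]
  rw [h2, sum_blocks lam Ts hTs]
  refine Finset.sum_congr rfl (fun i hi => ?_)
  rw [Finset.mem_Icc] at hi
  rw [← Finset.sum_filter, ← Finset.sdiff_eq_filter]
  exact sum_const_block lam Ts F hblock i hi.1 hi.2 n _ (Finset.sdiff_subset)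

end Final

/-- Structure-tensor characterization of the non-emptiness of the class of `N × T`
(0,1)-matrices (indexed by `1,...,N` and `1,...,T`) with row sums `r`, column sums `h`,
and zeros prescribed by a pattern matrix `F` describable by `lam + 1` special column
indices `0 = Ts 0 < Ts 1 < ... < Ts lam = T`. -/
theorem zeroOne_completion_structure_tensor
    (N T lam : ℕ) (hlam : 1 ≤ lam)
    (Ts : ℕ → ℕ) (hTs0 : Ts 0 = 0) (hTsT : Ts lam = T)
    (hTsmono : ∀ i < lam, Ts i < Ts (i + 1))
    (h r : ℕ → ℕ) (F : ℕ → ℕ → ℕ) (hF : ∀ n j, F n j ≤ 1)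
    (hblock : ∀ i, 1 ≤ i → i ≤ lam → ∀ j, Ts (i - 1) < j → j ≤ Ts i →
      ∀ n, F n j = F n (Ts i))
    (hmono : ∀ i, 1 ≤ i → i ≤ lam → ∀ j j', Ts (i - 1) < j → j ≤ j' → j' ≤ Ts i →
      h j' ≤ h j)
    (hsum : ∑ j ∈ Finset.Icc 1 T, h j = ∑ n ∈ Finset.Icc 1 N, r n) :
    (∃ A : ℕ → ℕ → ℕ,
        (∀ n j, A n j ≤ F n j) ∧
        (∀ n ∈ Finset.Icc 1 N, ∑ j ∈ Finset.Icc 1 T, A n j = r n) ∧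
        (∀ j ∈ Finset.Icc 1 T, ∑ n ∈ Finset.Icc 1 N, A n j = h j)) ↔
      (∀ k : ℕ → ℕ, (∀ i, 1 ≤ i → i ≤ lam → k i ≤ Ts i - Ts (i - 1)) →
        0 ≤ (∑ i ∈ Finset.Icc 1 lam,
              ∑ j ∈ Finset.Icc (Ts (i - 1) + k i + 1) (Ts i), (h j : ℤ))
            - ∑ n ∈ Finset.Icc 1 N,
                max ((r n : ℤ) - ∑ i ∈ Finset.Icc 1 lam, (k i : ℤ) * (F n (Ts i) : ℤ)) 0) := by
  classical
  have hTsle : ∀ i < lam, Ts i ≤ Ts (i + 1) := fun i hi => le_of_lt (hTsmono i hi)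
  have hconv : ∀ k : ℕ → ℕ, (∀ i, 1 ≤ i → i ≤ lam → k i ≤ Ts i - Ts (i - 1)) →
      (∑ i ∈ Finset.Icc 1 lam,
          ∑ j ∈ Finset.Icc (Ts (i - 1) + k i + 1) (Ts i), (h j : ℤ))
        - ∑ n ∈ Finset.Icc 1 N,
            max ((r n : ℤ) - ∑ i ∈ Finset.Icc 1 lam, (k i : ℤ) * (F n (Ts i) : ℤ)) 0
      = ZOC.fval N T h r F (Jk lam Ts k) := by
    intro k hk
    unfold ZOC.fval
    have e1 : ∑ j ∈ Jk lam Ts k, (h j : ℤ)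
        = ∑ i ∈ Icc 1 lam, ∑ j ∈ Icc (Ts (i - 1) + k i + 1) (Ts i), (h j : ℤ) := by
      rw [sum_Jk lam Ts hTsle k]
      exact Finset.sum_congr rfl (fun i _ => by rw [Finset.Icc_add_one_left_eq_Ioc])
    have e2 : ∀ n, ∑ j ∈ Icc 1 T \ Jk lam Ts k, (F n j : ℤ)
        = ∑ i ∈ Icc 1 lam, (k i : ℤ) * (F n (Ts i) : ℤ) := by
      intro n
      rw [compl_sum lam T Ts F hTsle hTs0 hTsT hblock]
      refine Finset.sum_congr rfl (fun i hi => ?_)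
      rw [Finset.mem_Icc] at hi
      rw [block_sdiff_Jk lam Ts hTsle k hk i hi.1 hi.2, Nat.card_Ioc]
      congr 2
      omega
    rw [e1]
    congr 1
    exact Finset.sum_congr rfl (fun n _ => by rw [e2 n])
  constructor
  · rintro ⟨A, hAle, hArow, hAcol⟩ k hk
    rw [hconv k hk]
    exact ZOC2.fval_nonneg_of_exists N T h r F A hAle hArow hAcol _
      (Jk_subset lam Ts T hTsle hTsT k)
  · intro hK
    apply ZOC2.exists_matrix N T h r F hF hsum
    intro J hJ
    set k : ℕ → ℕ :=
      fun i => Ts i - Ts (i - 1) - ((Ioc (Ts (i - 1)) (Ts i)) ∩ J).card with hkdef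
    have hk : ∀ i, 1 ≤ i → i ≤ lam → k i ≤ Ts i - Ts (i - 1) := by
      intro i _ _
      simp only [hkdef]
      omega
    have h0 := hK k hk
    rw [hconv k hk] at h0
    refine le_trans h0 ?_
    unfold ZOC.fval
    have ecompl : ∀ n, ∑ j ∈ Icc 1 T \ Jk lam Ts k, (F n j : ℤ)
        = ∑ j ∈ Icc 1 T \ J, (F n j : ℤ) := by
      intro n
      rw [compl_sum lam T Ts F hTsle hTs0 hTsT hblock (Jk lam Ts k) n,
        compl_sum lam T Ts F hTsle hTs0 hTsT hblock J n]
      refine Finset.sum_congr rfl (fun i hi => ?_)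
      rw [Finset.mem_Icc] at hi
      rw [block_sdiff_Jk lam Ts hTsle k hk i hi.1 hi.2, Nat.card_Ioc]
      congr 2
      have hcards := Finset.card_inter_add_card_sdiff (Ioc (Ts (i - 1)) (Ts i)) J
      have hcard_block : (Ioc (Ts (i - 1)) (Ts i)).card = Ts i - Ts (i - 1) :=
        Nat.card_Ioc _ _
      simp only [hkdef]
      omega
    have ehsum : ∑ j ∈ Jk lam Ts k, (h j : ℤ) ≤ ∑ j ∈ J, (h j : ℤ) := by
      rw [sum_Jk lam Ts hTsle k]
      have h1 : J = (Icc 1 T).filter (fun j => j ∈ J) := by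
        rw [Finset.filter_mem_eq_inter, Finset.inter_eq_right.mpr hJ]
      have eJ : ∑ j ∈ J, (h j : ℤ)
          = ∑ i ∈ Icc 1 lam, ∑ j ∈ Ioc (Ts (i - 1)) (Ts i) ∩ J, (h j : ℤ) := by
        conv_lhs => rw [h1]
        rw [Finset.sum_filter]
        have h2 : Icc 1 T = Ioc (Ts 0) (Ts lam) := by
          rw [hTs0, hTsT, ← Finset.Icc_add_one_left_eq_Ioc, zero_add]
        rw [h2, ZOCB.sum_blocks lam Ts hTsle]
        refine Finset.sum_congr rfl (fun i hi => ?_)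
        rw [← Finset.sum_filter, Finset.filter_mem_eq_inter]
      rw [eJ]
      refine Finset.sum_le_sum (fun i hi => ?_)
      rw [Finset.mem_Icc] at hi
      have hsubS : Ioc (Ts (i - 1)) (Ts i) ∩ J ⊆ Ioc (Ts (i - 1)) (Ts i) :=
        Finset.inter_subset_left
      have hTsi : Ts (i - 1) ≤ Ts i := ZOCB.ts_mono lam Ts hTsle (i - 1) i (by omega) (by omega)
      have hcard_le : (Ioc (Ts (i - 1)) (Ts i) ∩ J).card ≤ Ts i - Ts (i - 1) := by
        have := Finset.card_le_card hsubS
        rwa [Nat.card_Ioc] at this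
      have htail := ZOCB.tail_sum_le h (Ts (i - 1)) (Ts i) (Ioc (Ts (i - 1)) (Ts i) ∩ J) hsubS
        (hmono i hi.1 hi.2)
      have heq : Ts i - (Ioc (Ts (i - 1)) (Ts i) ∩ J).card = Ts (i - 1) + k i := by
        simp only [hkdef]
        omega
      rwa [heq] at htail
    have hmax : ∀ n ∈ Icc 1 N,
        max ((r n : ℤ) - ∑ j ∈ Icc 1 T \ J, (F n j : ℤ)) 0
          = max ((r n : ℤ) - ∑ j ∈ Icc 1 T \ Jk lam Ts k, (F n j : ℤ)) 0 :=
      fun n _ => by rw [ecompl n]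
    rw [Finset.sum_congr rfl hmax]
    omega
end

section
/- Let h in N^T, r in N^N, and r̄ in N^N with r̄_n ≥ 1 for all n. Suppose there exists an N×T matrix A with nonnegative integer entries, 0 ≤ A(n,j) ≤ r̄_n for all n, j, each row n summing to r_n, and each column j summing to at most h_j. If h' in N^T is majorized by h (with the convention that ||h'||_1 = ||h||_1), then there also exists such a matrix with column sums bounded by h' instead of h. -/
open Finset

def pre {T : ℕ} (x : Fin T → ℕ) (k : ℕ) : ℕ :=
  ∑ i ∈ univ.filter (fun i : Fin T => (i : ℕ) < k), x i

lemma pre_mono {T : ℕ} (x : Fin T → ℕ) {a b : ℕ} (hab : a ≤ b) : pre x a ≤ pre x b := by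
  apply Finset.sum_le_sum_of_subset
  intro i hi
  simp only [mem_filter, mem_univ, true_and] at hi ⊢
  omega

lemma pre_total {T : ℕ} (x : Fin T → ℕ) {k : ℕ} (hk : T ≤ k) : pre x k = ∑ i, x i := by
  apply Finset.sum_congr _ (fun _ _ => rfl)
  ext i; simp only [mem_filter, mem_univ, true_and, iff_true]
  exact lt_of_lt_of_le i.2 hk

lemma pre_succ {T : ℕ} (x : Fin T → ℕ) {c : ℕ} (hc : c < T) :
    pre x (c + 1) = pre x c + x ⟨c, hc⟩ := by
  have : univ.filter (fun i : Fin T => (i : ℕ) < c + 1)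
      = insert ⟨c, hc⟩ (univ.filter (fun i : Fin T => (i : ℕ) < c)) := by
    ext i
    simp only [mem_filter, mem_univ, true_and, mem_insert, Fin.ext_iff]
    omega
  rw [pre, this, Finset.sum_insert (by simp), pre]
  ring

lemma sum_le_pre {T : ℕ} {x : Fin T → ℕ} (hx : Antitone x) (S : Finset (Fin T)) :
    ∑ i ∈ S, x i ≤ pre x S.card := by
  induction S using Finset.strongInduction with
  | _ S ih =>
    rcases S.eq_empty_or_nonempty with rfl | hne
    · simp [pre]
    · set i0 := S.max' hne with hi0
      have hmem : i0 ∈ S := S.max'_mem hne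
      have hcard : S.card ≤ (i0 : ℕ) + 1 := by
        have hsub : S ⊆ univ.filter (fun i : Fin T => (i : ℕ) < (i0 : ℕ) + 1) := by
          intro j hj
          simp only [mem_filter, mem_univ, true_and]
          have := S.le_max' j hj
          omega
        calc S.card ≤ _ := Finset.card_le_card hsub
          _ ≤ (i0:ℕ) + 1 := by
            have := Finset.card_le_card_of_injOn (fun i : Fin T => (i : ℕ))
              (t := Finset.range ((i0:ℕ)+1))
              (s := univ.filter (fun i : Fin T => (i : ℕ) < (i0 : ℕ) + 1))
              (by intro a ha; simp at ha
                  simp [Finset.mem_range]; omega)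
              (by intro a _ b _ hab; exact Fin.ext hab)
            simpa using this
      have hc1 : S.card - 1 < T := by
        have := hcard; have := i0.2; omega
      have hc0 : 0 < S.card := Finset.card_pos.2 hne
      have hstep : x i0 ≤ x ⟨S.card - 1, hc1⟩ := by
        apply hx
        show (⟨S.card - 1, hc1⟩ : Fin T) ≤ i0
        simp only [Fin.le_def]
        omega
      have hrec := ih (S.erase i0) (Finset.erase_ssubset hmem)
      have hce : (S.erase i0).card = S.card - 1 := Finset.card_erase_of_mem hmem
      rw [hce] at hrec
      have : pre x S.card = pre x (S.card - 1) + x ⟨S.card - 1, hc1⟩ := by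
        have := pre_succ x hc1
        rw [Nat.sub_add_cancel hc0] at this
        exact this
      rw [← Finset.add_sum_erase S x hmem, this]
      omega

lemma topSum_eq_pre {T : ℕ} {x : Fin T → ℕ} (hx : Antitone x) (k : ℕ) :
    topSum x k = pre x k := by
  apply le_antisymm
  · apply Finset.sup_le
    intro S hS
    simp only [mem_filter, Finset.mem_powerset] at hS
    exact le_trans (sum_le_pre hx S) (pre_mono x hS.2)
  · apply Finset.le_sup (f := fun S => ∑ i ∈ S, x i)
    simp only [mem_filter, Finset.mem_powerset]
    refine ⟨Finset.subset_univ _, ?_⟩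
    have := Finset.card_le_card_of_injOn (fun i : Fin T => (i : ℕ)) (t := Finset.range k)
      (s := univ.filter (fun i : Fin T => (i : ℕ) < k))
      (by intro a ha; simp at ha
          simpa [Finset.mem_range] using ha)
      (by intro a _ b _ hab; exact Fin.ext hab)
    simpa using this

lemma topSum_comp_le {T : ℕ} (x : Fin T → ℕ) (σ : Equiv.Perm (Fin T)) (k : ℕ) :
    topSum (fun i => x (σ i)) k ≤ topSum x k := by
  apply Finset.sup_le
  intro S hS
  simp only [mem_filter, Finset.mem_powerset] at hS
  have : ∑ i ∈ S, x (σ i) = ∑ j ∈ S.image σ, x j :=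
    (Finset.sum_image (fun a _ b _ h => σ.injective h)).symm
  rw [this]
  apply Finset.le_sup (f := fun S => ∑ i ∈ S, x i)
  simp only [mem_filter, Finset.mem_powerset]
  exact ⟨Finset.subset_univ _, by rw [Finset.card_image_of_injective _ σ.injective]; exact hS.2⟩

lemma topSum_comp {T : ℕ} (x : Fin T → ℕ) (σ : Equiv.Perm (Fin T)) (k : ℕ) :
    topSum (fun i => x (σ i)) k = topSum x k := by
  refine le_antisymm (topSum_comp_le x σ k) ?_
  have := topSum_comp_le (fun i => x (σ i)) σ⁻¹ k
  simpa using this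

lemma exists_antitone_perm {T : ℕ} (x : Fin T → ℕ) :
    ∃ σ : Equiv.Perm (Fin T), Antitone (fun i => x (σ i)) := by
  refine ⟨Fin.revPerm.trans (Tuple.sort x), ?_⟩
  intro i j hij
  simp only [Equiv.trans_apply, Fin.revPerm_apply]
  exact Tuple.monotone_sort x (Fin.rev_le_rev.2 hij)

lemma core {N T : ℕ} (r rbar : Fin N → ℕ) (h' : Fin T → ℕ) (hh' : Antitone h') :
    ∀ d (h : Fin T → ℕ), (∑ j, ((h j - h' j) + (h' j - h j))) = d → Antitone h →
    (∑ j, h' j = ∑ j, h j) → (∀ k, pre h' k ≤ pre h k) →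
    (∃ A : Fin N → Fin T → ℕ,
        (∀ n j, A n j ≤ rbar n) ∧ (∀ n, ∑ j, A n j = r n) ∧ (∀ j, ∑ n, A n j ≤ h j)) →
    (∃ A : Fin N → Fin T → ℕ,
        (∀ n j, A n j ≤ rbar n) ∧ (∀ n, ∑ j, A n j = r n) ∧ (∀ j, ∑ n, A n j ≤ h' j)) := by
  intro d
  induction d using Nat.strong_induction_on with
  | _ d ih =>
    intro h hd hmono hsum hp hex
    simp only [pre] at hp
    by_cases hDp : ∀ j, h j ≤ h' j
    · have heq : ∀ j, h' j = h j := by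
        intro j
        by_contra hne
        have hlt : ∑ j, h j < ∑ j, h' j :=
          Finset.sum_lt_sum (fun i _ => hDp i)
            ⟨j, mem_univ j, lt_of_le_of_ne (hDp j) (fun e => hne e.symm)⟩
        omega
      obtain ⟨A, h1, h2, h3⟩ := hex
      exact ⟨A, h1, h2, fun j => le_trans (h3 j) (le_of_eq (heq j).symm)⟩
    · push_neg at hDp
      obtain ⟨j0, hj0⟩ := hDp
      -- a generic splitting of a full sum at a pivot
      have split3 : ∀ (p : Fin T) (f : Fin T → ℕ),
          ∑ j, f j = (∑ i ∈ univ.filter (fun i : Fin T => (i : ℕ) < (p : ℕ)), f i) + f p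
            + ∑ j ∈ univ.filter (fun j => p < j), f j := by
        intro p f
        rw [← Finset.sum_filter_add_sum_filter_not univ (fun j : Fin T => (j : ℕ) < (p : ℕ)) f]
        have hset : univ.filter (fun j : Fin T => ¬ (j : ℕ) < (p : ℕ))
            = insert p (univ.filter (fun j : Fin T => p < j)) := by
          ext j
          simp only [mem_filter, mem_univ, true_and, mem_insert, Fin.lt_def, not_lt, Fin.ext_iff]
          omega
        rw [hset, Finset.sum_insert
          (by simp only [mem_filter, mem_univ, true_and]; exact lt_irrefl p)]
        ring
      -- existence of a deficient index after j0
      have hj2ex : ∃ j, j0 < j ∧ h j < h' j := by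
        by_contra hno
        push_neg at hno
        have hs1 := split3 j0 h
        have hs2 := split3 j0 h'
        have hle : ∑ j ∈ univ.filter (fun j => j0 < j), h' j
            ≤ ∑ j ∈ univ.filter (fun j => j0 < j), h j := by
          apply Finset.sum_le_sum
          intro j hj
          rw [mem_filter] at hj
          exact hno j hj.2
        have := hp (j0 : ℕ)
        omega
      -- j2 : minimal deficient index after j0
      obtain ⟨j2, hj2a, hj2b, hj2min⟩ :
          ∃ j2 : Fin T, j0 < j2 ∧ h j2 < h' j2 ∧ ∀ j, j0 < j → h j < h' j → j2 ≤ j := by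
        obtain ⟨jw, hw1, hw2⟩ := hj2ex
        have hne : (univ.filter (fun j : Fin T => j0 < j ∧ h j < h' j)).Nonempty :=
          ⟨jw, by simp [hw1, hw2]⟩
        have hmem := Finset.min'_mem _ hne
        rw [mem_filter] at hmem
        exact ⟨_, hmem.2.1, hmem.2.2, fun j u v => Finset.min'_le _ _ (by simp [u, v])⟩
      set a := h j0 with hadef
      set b := h j2 with hbdef
      have hab : b + 2 ≤ a := by
        have h1 : h' j2 ≤ h' j0 := hh' (le_of_lt hj2a)
        omega
      -- j1s : the largest index of value a ; j2s : smallest index of value b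
      obtain ⟨j1s, hj1sval, hj1smax⟩ :
          ∃ j1s : Fin T, h j1s = a ∧ ∀ i, h i = a → i ≤ j1s := by
        have hne : (univ.filter (fun i : Fin T => h i = a)).Nonempty := ⟨j0, by simp [hadef]⟩
        have hmem := Finset.max'_mem _ hne
        rw [mem_filter] at hmem
        exact ⟨_, hmem.2, fun i u => Finset.le_max' _ _ (by simp [u])⟩
      obtain ⟨j2s, hj2sval, hj2smin⟩ :
          ∃ j2s : Fin T, h j2s = b ∧ ∀ i, h i = b → j2s ≤ i := by
        have hne : (univ.filter (fun i : Fin T => h i = b)).Nonempty := ⟨j2, by simp [hbdef]⟩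
        have hmem := Finset.min'_mem _ hne
        rw [mem_filter] at hmem
        exact ⟨_, hmem.2, fun i u => Finset.min'_le _ _ (by simp [u])⟩
      have hj1sge : j0 ≤ j1s := hj1smax j0 hadef.symm
      have hj2sle : j2s ≤ j2 := hj2smin j2 hbdef.symm
      have h'j1s : h' j1s < a := lt_of_le_of_lt (hh' hj1sge) hj0
      have h'j2s : b < h' j2s := lt_of_lt_of_le hj2b (hh' hj2sle)
      have hss : j1s < j2s := by
        by_contra hc
        push_neg at hc
        have := hmono hc
        omega
      have hssne : j1s ≠ j2s := ne_of_lt hss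
      have f2 : ∀ i, j1s < i → h i < a := by
        intro i hi
        have h1 : h i ≤ a := hj1sval ▸ hmono (le_of_lt hi)
        rcases lt_or_eq_of_le h1 with h2 | h2
        · exact h2
        · exact absurd (hj1smax i h2) (not_le.2 hi)
      have f3 : ∀ i, i < j2s → b < h i := by
        intro i hi
        have h1 : b ≤ h i := hj2sval ▸ hmono (le_of_lt hi)
        rcases lt_or_eq_of_le h1 with h2 | h2
        · exact h2
        · exact absurd (hj2smin i h2.symm) (not_le.2 hi)
      have f4 : ∀ i, i ≤ j1s → a ≤ h i := fun i hi => hj1sval ▸ hmono hi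
      have f5 : ∀ i, j2s ≤ i → h i ≤ b := fun i hi => hj2sval ▸ hmono hi
      have mid : ∀ i, j0 ≤ i → i < j2 → h' i ≤ h i := by
        intro i hi1 hi2
        rcases eq_or_lt_of_le hi1 with rfl | hlt
        · exact le_of_lt hj0
        · by_contra hc
          push_neg at hc
          exact absurd (hj2min i hlt hc) (not_le.2 hi2)
      -- the transferred vector
      set h'' : Fin T → ℕ := fun i => if i = j1s then a - 1 else if i = j2s then b + 1 else h i
        with hh''def
      have hv1 : h'' j1s = a - 1 := by simp [hh''def]
      have hv2 : h'' j2s = b + 1 := by simp [hh''def, hssne.symm]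
      have hvo : ∀ i, i ≠ j1s → i ≠ j2s → h'' i = h i := by
        intro i hi1 hi2
        simp [hh''def, hi1, hi2]
      have hmono'' : Antitone h'' := by
        intro i j hij
        by_cases hje : j = j1s
        · rw [hje] at hij ⊢
          rw [hv1]
          by_cases hie : i = j1s
          · rw [hie, hv1]
          · have hie2 : i ≠ j2s := fun e => absurd (e ▸ hij) (not_le.2 hss)
            rw [hvo i hie hie2]
            have := f4 i hij
            omega
        · by_cases hje2 : j = j2s
          · rw [hje2] at hij ⊢
            rw [hv2]
            by_cases hie : i = j1s
            · rw [hie, hv1]; omega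
            · by_cases hie2 : i = j2s
              · rw [hie2, hv2]
              · rw [hvo i hie hie2]
                have := f3 i (lt_of_le_of_ne hij hie2)
                omega
          · rw [hvo j hje hje2]
            by_cases hie : i = j1s
            · rw [hie, hv1]
              have hlt : j1s < j := lt_of_le_of_ne (hie ▸ hij) (fun e => hje e.symm)
              have := f2 j hlt
              omega
            · by_cases hie2 : i = j2s
              · rw [hie2, hv2]
                have hlt : j2s < j := lt_of_le_of_ne (hie2 ▸ hij) (fun e => hje2 e.symm)
                have := f5 j (le_of_lt hlt)
                omega
              · rw [hvo i hie hie2]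
                exact hmono hij
      -- two-point split on any finset containing both special indices
      have split2 : ∀ (s : Finset (Fin T)) (f : Fin T → ℕ), j1s ∈ s → j2s ∈ s →
          ∑ j ∈ s, f j = f j1s + f j2s + ∑ j ∈ (s.erase j1s).erase j2s, f j := by
        intro s f m1 m2
        rw [← Finset.add_sum_erase _ f m1,
          ← Finset.add_sum_erase _ f (mem_erase.2 ⟨hssne.symm, m2⟩), ← add_assoc]
      have hrest : ∀ (s : Finset (Fin T)) j, j ∈ (s.erase j1s).erase j2s → h'' j = h j := by
        intro s j hj
        rw [mem_erase] at hj
        have hj' := hj.2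
        rw [mem_erase] at hj'
        exact hvo j hj'.1 hj.1
      have hsum'' : ∑ j, h' j = ∑ j, h'' j := by
        have e1 := split2 univ h (mem_univ _) (mem_univ _)
        have e2 := split2 univ h'' (mem_univ _) (mem_univ _)
        have e3 : ∑ j ∈ (univ.erase j1s).erase j2s, h'' j
            = ∑ j ∈ (univ.erase j1s).erase j2s, h j :=
          Finset.sum_congr rfl (fun j hj => hrest univ j hj)
        rw [e3, hv1, hv2] at e2
        rw [hj1sval, hj2sval] at e1
        omega
      have hm'' : (∑ j, ((h'' j - h' j) + (h' j - h'' j))) + 2 = d := by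
        have e1 := split2 univ (fun j => (h j - h' j) + (h' j - h j)) (mem_univ _) (mem_univ _)
        have e2 := split2 univ (fun j => (h'' j - h' j) + (h' j - h'' j)) (mem_univ _) (mem_univ _)
        have e3 : ∑ j ∈ (univ.erase j1s).erase j2s, ((h'' j - h' j) + (h' j - h'' j))
            = ∑ j ∈ (univ.erase j1s).erase j2s, ((h j - h' j) + (h' j - h j)) :=
          Finset.sum_congr rfl (fun j hj => by rw [hrest univ j hj])
        rw [e3, hv1, hv2] at e2
        rw [hj1sval, hj2sval] at e1
        omega
      -- prefix domination is preserved
      have key : ∀ k, pre h' k ≤ pre h'' k := by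
        intro k
        simp only [pre]
        by_cases hk1 : (j1s : ℕ) < k
        · by_cases hk2 : (j2s : ℕ) < k
          · have m1 : j1s ∈ univ.filter (fun i : Fin T => (i : ℕ) < k) := by
              simp only [mem_filter, mem_univ, true_and]; exact hk1
            have m2 : j2s ∈ univ.filter (fun i : Fin T => (i : ℕ) < k) := by
              simp only [mem_filter, mem_univ, true_and]; exact hk2
            have e1 := split2 _ h m1 m2
            have e2 := split2 _ h'' m1 m2
            have e3 : ∑ j ∈ ((univ.filter (fun i : Fin T => (i : ℕ) < k)).erase j1s).erase j2s, h'' j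
                = ∑ j ∈ ((univ.filter (fun i : Fin T => (i : ℕ) < k)).erase j1s).erase j2s, h j :=
              Finset.sum_congr rfl (fun j hj => hrest _ j hj)
            rw [e3, hv1, hv2] at e2
            rw [hj1sval, hj2sval] at e1
            have := hp k
            omega
          · -- j1s inside, j2s outside : need strictness
            have m1 : j1s ∈ univ.filter (fun i : Fin T => (i : ℕ) < k) := by
              simp only [mem_filter, mem_univ, true_and]; exact hk1
            have e1 := Finset.add_sum_erase _ h m1
            have e2 := Finset.add_sum_erase _ h'' m1
            rw [hj1sval] at e1
            rw [hv1] at e2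
            have e3 : ∑ j ∈ (univ.filter (fun i : Fin T => (i : ℕ) < k)).erase j1s, h'' j
                = ∑ j ∈ (univ.filter (fun i : Fin T => (i : ℕ) < k)).erase j1s, h j := by
              apply Finset.sum_congr rfl
              intro j hj
              rw [mem_erase, mem_filter] at hj
              apply hvo j hj.1
              intro e; rw [e] at hj
              exact hk2 hj.2.2
            rw [e3] at e2
            -- strictness : pre h' k + 1 ≤ pre h k
            have hk1' : (j0 : ℕ) < k := lt_of_le_of_lt hj1sge hk1
            have hkj2 : k ≤ (j2 : ℕ) := le_trans (not_lt.1 hk2) hj2sle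
            have psplit : ∀ f : Fin T → ℕ,
                ∑ i ∈ univ.filter (fun i : Fin T => (i : ℕ) < k), f i
                = (∑ i ∈ univ.filter (fun i : Fin T => (i : ℕ) < (j0 : ℕ)), f i)
                + ∑ i ∈ univ.filter (fun i : Fin T => (j0 : ℕ) ≤ (i : ℕ) ∧ (i : ℕ) < k), f i := by
              intro f
              rw [← Finset.sum_filter_add_sum_filter_not
                (univ.filter (fun i : Fin T => (i : ℕ) < k)) (fun i : Fin T => (i : ℕ) < (j0 : ℕ)) f]
              congr 1
              · apply Finset.sum_congr _ (fun _ _ => rfl)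
                rw [Finset.filter_filter]
                ext i
                simp only [mem_filter, mem_univ, true_and]
                omega
              · apply Finset.sum_congr _ (fun _ _ => rfl)
                rw [Finset.filter_filter]
                ext i
                simp only [mem_filter, mem_univ, true_and, not_lt]
                omega
            have hmlt : ∑ i ∈ univ.filter (fun i : Fin T => (j0 : ℕ) ≤ (i : ℕ) ∧ (i : ℕ) < k), h' i
                < ∑ i ∈ univ.filter (fun i : Fin T => (j0 : ℕ) ≤ (i : ℕ) ∧ (i : ℕ) < k), h i := by
              apply Finset.sum_lt_sum
              · intro i hi
                rw [mem_filter] at hi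
                apply mid i (by rw [Fin.le_def]; exact hi.2.1)
                rw [Fin.lt_def]
                omega
              · refine ⟨j0, ?_, hj0⟩
                simp only [mem_filter, mem_univ, true_and]
                exact ⟨le_refl _, hk1'⟩
            have q1 := psplit h
            have q2 := psplit h'
            have := hp (j0 : ℕ)
            omega
        · have hk2 : ¬ (j2s : ℕ) < k := by
            have : (j1s : ℕ) < (j2s : ℕ) := hss
            omega
          have e : ∑ i ∈ univ.filter (fun i : Fin T => (i : ℕ) < k), h'' i
              = ∑ i ∈ univ.filter (fun i : Fin T => (i : ℕ) < k), h i := by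
            apply Finset.sum_congr rfl
            intro i hi
            rw [mem_filter] at hi
            apply hvo i
            · intro e; rw [e] at hi; exact hk1 hi.2
            · intro e; rw [e] at hi; exact hk2 hi.2
          rw [e]
          exact hp k
      -- matrix transfer from h to h''
      have hex'' : ∃ A : Fin N → Fin T → ℕ,
          (∀ n j, A n j ≤ rbar n) ∧ (∀ n, ∑ j, A n j = r n) ∧ (∀ j, ∑ n, A n j ≤ h'' j) := by
        obtain ⟨A, hA1, hA2, hA3⟩ := hex
        by_cases hcap : ∑ n, A n j1s ≤ a - 1
        · refine ⟨A, hA1, hA2, fun j => ?_⟩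
          by_cases hje : j = j1s
          · rw [hje, hv1]; exact hje ▸ hcap
          · by_cases hje2 : j = j2s
            · rw [hje2, hv2]
              have := hA3 j2s
              rw [hj2sval] at this
              omega
            · rw [hvo j hje hje2]; exact hA3 j
        · have hc1 : ∑ n, A n j1s = a := by
            have := hA3 j1s
            rw [hj1sval] at this
            omega
          have hlt : ∑ n, A n j2s < ∑ n, A n j1s := by
            have := hA3 j2s
            rw [hj2sval] at this
            omega
          have hn0ex : ∃ n0, A n0 j2s < A n0 j1s := by
            by_contra hno
            push_neg at hno
            have := Finset.sum_le_sum (fun n (_ : n ∈ univ) => hno n)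
            omega
          obtain ⟨n0, hn0⟩ := hn0ex
          set B : Fin N → Fin T → ℕ := fun n j =>
            if n = n0 ∧ j = j1s then A n j - 1
            else if n = n0 ∧ j = j2s then A n j + 1 else A n j with hBdef
          have hB1 : B n0 j1s = A n0 j1s - 1 := by simp [hBdef]
          have hB2 : B n0 j2s = A n0 j2s + 1 := by simp [hBdef, hssne.symm]
          have hBrow : ∀ n j, n ≠ n0 → B n j = A n j := by
            intro n j hn
            simp [hBdef, hn]
          have hBcol : ∀ n j, j ≠ j1s → j ≠ j2s → B n j = A n j := by
            intro n j u v
            simp [hBdef, u, v]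
          refine ⟨B, ?_, ?_, ?_⟩
          · intro n j
            by_cases hn : n = n0
            · by_cases u : j = j1s
              · rw [hn, u, hB1]; exact le_trans (Nat.sub_le _ _) (hA1 n0 j1s)
              · by_cases v : j = j2s
                · rw [hn, v, hB2]
                  exact le_trans hn0 (hA1 n0 j1s)
                · rw [hBcol n j u v]; exact hA1 n j
            · rw [hBrow n j hn]; exact hA1 n j
          · intro n
            by_cases hn : n = n0
            · rw [hn, ← hA2 n0]
              have e1 := split2 univ (B n0) (mem_univ _) (mem_univ _)
              have e2 := split2 univ (A n0) (mem_univ _) (mem_univ _)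
              have e3 : ∑ j ∈ (univ.erase j1s).erase j2s, B n0 j
                  = ∑ j ∈ (univ.erase j1s).erase j2s, A n0 j := by
                apply Finset.sum_congr rfl
                intro j hj
                rw [mem_erase] at hj
                have hj' := hj.2
                rw [mem_erase] at hj'
                exact hBcol n0 j hj'.1 hj.1
              rw [e3, hB1, hB2] at e1
              omega
            · rw [show ∑ j, B n j = ∑ j, A n j from
                Finset.sum_congr rfl (fun j _ => hBrow n j hn)]
              exact hA2 n
          · intro j
            by_cases u : j = j1s
            · rw [u, hv1]
              have e1 := Finset.add_sum_erase univ (fun n => B n j1s) (mem_univ n0)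
              have e2 := Finset.add_sum_erase univ (fun n => A n j1s) (mem_univ n0)
              have e3 : ∑ n ∈ univ.erase n0, B n j1s = ∑ n ∈ univ.erase n0, A n j1s := by
                apply Finset.sum_congr rfl
                intro n hn
                rw [mem_erase] at hn
                exact hBrow n j1s hn.1
              rw [hB1, e3] at e1
              omega
            · by_cases v : j = j2s
              · rw [v, hv2]
                have e1 := Finset.add_sum_erase univ (fun n => B n j2s) (mem_univ n0)
                have e2 := Finset.add_sum_erase univ (fun n => A n j2s) (mem_univ n0)
                have e3 : ∑ n ∈ univ.erase n0, B n j2s = ∑ n ∈ univ.erase n0, A n j2s := by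
                  apply Finset.sum_congr rfl
                  intro n hn
                  rw [mem_erase] at hn
                  exact hBrow n j2s hn.1
                rw [hB2, e3] at e1
                have := hA3 j2s
                rw [hj2sval] at this
                omega
              · rw [hvo j u v,
                  show ∑ n, B n j = ∑ n, A n j from
                    Finset.sum_congr rfl (fun n _ => by
                      by_cases hn : n = n0
                      · subst hn; exact hBcol n j u v
                      · exact hBrow n j hn)]
                exact hA3 j
      exact ih (∑ j, ((h'' j - h' j) + (h' j - h'' j))) (by omega) h'' rfl hmono'' hsum'' key hex''

/-- Rate-constrained analogue: if a nonnegative integer matrix with row caps `rbar`,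
exact row sums `r` and column sums bounded by `h` exists, and `h'` is majorized by `h`,
then such a matrix with column sums bounded by `h'` also exists. -/
theorem rate_constrained_of_majorized (N T : ℕ) (h h' : Fin T → ℕ)
    (r rbar : Fin N → ℕ) (hrbar : ∀ n, 1 ≤ rbar n)
    (hsum : ∑ j, h' j = ∑ j, h j)
    (hmaj : ∀ k, topSum h' k ≤ topSum h k) :
    (∃ A : Fin N → Fin T → ℕ,
        (∀ n j, A n j ≤ rbar n) ∧
        (∀ n, ∑ j, A n j = r n) ∧
        (∀ j, ∑ n, A n j ≤ h j)) →
      (∃ A : Fin N → Fin T → ℕ,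
        (∀ n j, A n j ≤ rbar n) ∧
        (∀ n, ∑ j, A n j = r n) ∧
        (∀ j, ∑ n, A n j ≤ h' j)) := by
  rintro ⟨A, hA1, hA2, hA3⟩
  obtain ⟨σ, hσ⟩ := exists_antitone_perm h
  obtain ⟨τ, hτ⟩ := exists_antitone_perm h'
  have hex1 : ∃ A : Fin N → Fin T → ℕ,
      (∀ n j, A n j ≤ rbar n) ∧ (∀ n, ∑ j, A n j = r n) ∧
      (∀ j, ∑ n, A n j ≤ (fun i => h (σ i)) j) := by
    refine ⟨fun n j => A n (σ j), fun n j => hA1 n (σ j), fun n => ?_, fun j => hA3 (σ j)⟩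
    rw [Equiv.sum_comp σ (A n)]
    exact hA2 n
  have hsum1 : ∑ j, (fun i => h' (τ i)) j = ∑ j, (fun i => h (σ i)) j := by
    rw [Equiv.sum_comp τ h', Equiv.sum_comp σ h]
    exact hsum
  have hp1 : ∀ k, pre (fun i => h' (τ i)) k ≤ pre (fun i => h (σ i)) k := by
    intro k
    rw [← topSum_eq_pre hτ, ← topSum_eq_pre hσ, topSum_comp, topSum_comp]
    exact hmaj k
  obtain ⟨B, hB1, hB2, hB3⟩ :=
    core r rbar (fun i => h' (τ i)) hτ _ (fun i => h (σ i)) rfl hσ hsum1 hp1 hex1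
  refine ⟨fun n j => B n (τ.symm j), fun n j => hB1 n (τ.symm j), fun n => ?_, fun j => ?_⟩
  · rw [Equiv.sum_comp τ.symm (B n)]
    exact hB2 n
  · have := hB3 (τ.symm j)
    simpa using this
end

section
/- (Rate-constrained adequacy, uniform service time) Let h in N^T sorted in non-increasing order, r in N^N, r̄ in N^N with r̄_n ≥ 1. There exists an N×T matrix A with integer entries satisfying 0 ≤ A(n,j) ≤ r̄_n, row sums equal to r_n, and column sums at most h_j, if and only if for every k = 0, 1, ..., T: Σ_{j=k+1}^T h_j ≥ Σ_{n=1}^N [r_n − r̄_n·k]^+. -/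
open Finset

private lemma filter_sum_eq_Ico {T : ℕ} (g : Fin T → ℕ) (k : ℕ) :
    ∑ j ∈ Finset.univ.filter (fun j : Fin T => k ≤ (j : ℕ)), g j =
    ∑ m ∈ Finset.Ico k T, (if hm : m < T then g ⟨m, hm⟩ else 0) := by
  rw [Finset.sum_filter]
  have h1 : ∀ j : Fin T, (if k ≤ (j : ℕ) then g j else 0)
      = (fun m => if k ≤ m then (if hm : m < T then g ⟨m, hm⟩ else 0) else 0) ((j : ℕ)) := by
    intro j; simp [j.isLt]
  rw [Finset.sum_congr rfl (fun j _ => h1 j),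
    Fin.sum_univ_eq_sum_range (fun m => if k ≤ m then (if hm : m < T then g ⟨m, hm⟩ else 0) else 0) T]
  rw [← Finset.sum_filter]
  apply Finset.sum_congr
  · ext m; simp [Finset.mem_Ico, Finset.mem_range]; omega
  · intros; rfl

private lemma greedy_seg (b R : ℕ) : ∀ t s, s ≤ t →
    ∑ m ∈ Finset.Ico s t, min b (R - b * m) = (R - b * s) - (R - b * t) := by
  intro t
  induction t with
  | zero => intro s hs; interval_cases s; simp
  | succ t ih =>
    intro s hs
    rcases Nat.lt_or_ge s (t+1) with hlt | hge
    · have hst : s ≤ t := by omega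
      rw [Finset.sum_Ico_succ_top hst, ih s hst]
      have h1 : b * s ≤ b * t := Nat.mul_le_mul_left b hst
      have h2 : b * (t+1) = b * t + b := by ring
      rcases Nat.le_total b (R - b * t) with hb | hb
      · rw [min_eq_left hb]; omega
      · rw [min_eq_right hb]; omega
    · have hse : s = t+1 := by omega
      subst hse; simp

private def colext {N T : ℕ} (A : Fin N → Fin T → ℕ) : ℕ → ℕ :=
  fun m => if hm : m < T then ∑ n, A n ⟨m, hm⟩ else 0

private def hext {T : ℕ} (h : Fin T → ℕ) : ℕ → ℕ :=
  fun m => if hm : m < T then h ⟨m, hm⟩ else 0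

private lemma tail_col_eq {N T : ℕ} (A : Fin N → Fin T → ℕ) (k : ℕ) :
    ∑ j ∈ Finset.univ.filter (fun j : Fin T => k ≤ (j : ℕ)), (∑ n, A n j)
      = ∑ m ∈ Finset.Ico k T, colext A m :=
  filter_sum_eq_Ico (fun j => ∑ n, A n j) k

private lemma tail_h_eq {T : ℕ} (h : Fin T → ℕ) (k : ℕ) :
    ∑ j ∈ Finset.univ.filter (fun j : Fin T => k ≤ (j : ℕ)), h j
      = ∑ m ∈ Finset.Ico k T, hext h m :=
  filter_sum_eq_Ico h k

private lemma colext_val {N T : ℕ} (A : Fin N → Fin T → ℕ) (x : Fin T) :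
    colext A (x : ℕ) = ∑ n, A n x := by
  simp [colext, x.isLt]

private lemma hext_val {T : ℕ} (h : Fin T → ℕ) (x : Fin T) :
    hext h (x : ℕ) = h x := by
  simp [hext, x.isLt]

private lemma exists_from_tail {N T : ℕ} (h : Fin T → ℕ) (hanti : Antitone h)
    (r rbar : Fin N → ℕ) :
    ∀ (d : ℕ) (A : Fin N → Fin T → ℕ),
      (∀ n j, A n j ≤ rbar n) →
      (∀ n, ∑ j, A n j = r n) →
      (∀ k : ℕ, ∑ j ∈ Finset.univ.filter (fun j : Fin T => k ≤ (j : ℕ)), (∑ n, A n j) ≤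
            ∑ j ∈ Finset.univ.filter (fun j : Fin T => k ≤ (j : ℕ)), h j) →
      (∑ j, ((∑ n, A n j) - h j)) ≤ d →
      ∃ A' : Fin N → Fin T → ℕ,
        (∀ n j, A' n j ≤ rbar n) ∧ (∀ n, ∑ j, A' n j = r n) ∧ (∀ j, ∑ n, A' n j ≤ h j) := by
  intro d
  induction d with
  | zero =>
    intro A hcap hrow htail hD
    refine ⟨A, hcap, hrow, ?_⟩
    intro j
    have h1 : (∑ n, A n j) - h j ≤ ∑ j', ((∑ n, A n j') - h j') :=
      Finset.single_le_sum (f := fun j' => (∑ n, A n j') - h j')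
        (fun _ _ => Nat.zero_le _) (Finset.mem_univ j)
    omega
  | succ d ih =>
    intro A hcap hrow htail hD
    by_cases hall : ∀ j, ∑ n, A n j ≤ h j
    · exact ⟨A, hcap, hrow, hall⟩
    push_neg at hall
    have htailI : ∀ k : ℕ, ∑ m ∈ Finset.Ico k T, colext A m ≤ ∑ m ∈ Finset.Ico k T, hext h m := by
      intro k; rw [← tail_col_eq, ← tail_h_eq]; exact htail k
    have hS : (Finset.univ.filter (fun x : Fin T => h x < ∑ n, A n x)).Nonempty := by
      obtain ⟨x, hx⟩ := hall
      exact ⟨x, Finset.mem_filter.mpr ⟨Finset.mem_univ x, hx⟩⟩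
    set j := (Finset.univ.filter (fun x : Fin T => h x < ∑ n, A n x)).max' hS with hjdef
    have hjov : h j < ∑ n, A n j :=
      (Finset.mem_filter.mp (Finset.max'_mem _ hS)).2
    have hjmax : ∀ x : Fin T, h x < ∑ n, A n x → (x : ℕ) ≤ (j : ℕ) := fun x hx =>
      Finset.le_max' _ x (Finset.mem_filter.mpr ⟨Finset.mem_univ x, hx⟩)
    -- a slack column exists after j
    have hslack : ∃ x : Fin T, (j : ℕ) < (x : ℕ) ∧ ∑ n, A n x < h x := by
      by_contra hno
      push_neg at hno
      have ht := htailI (j : ℕ)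
      have hjT : (j : ℕ) < T := j.isLt
      rw [Finset.sum_eq_sum_Ico_succ_bot hjT (colext A),
        Finset.sum_eq_sum_Ico_succ_bot hjT (hext h)] at ht
      have hmono : ∑ m ∈ Finset.Ico ((j : ℕ)+1) T, hext h m
          ≤ ∑ m ∈ Finset.Ico ((j : ℕ)+1) T, colext A m := by
        apply Finset.sum_le_sum
        intro m hm
        have hmT : m < T := (Finset.mem_Ico.mp hm).2
        have hjm : (j : ℕ) < m := by have := (Finset.mem_Ico.mp hm).1; omega
        have := hno ⟨m, hmT⟩ hjm
        simpa [colext, hext, hmT] using this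
      have hcj := colext_val A j
      have hhj := hext_val h j
      omega
    have hS' : (Finset.univ.filter
        (fun x : Fin T => (j : ℕ) < (x : ℕ) ∧ ∑ n, A n x < h x)).Nonempty := by
      obtain ⟨x, h1, h2⟩ := hslack
      exact ⟨x, Finset.mem_filter.mpr ⟨Finset.mem_univ x, h1, h2⟩⟩
    set j' := (Finset.univ.filter
        (fun x : Fin T => (j : ℕ) < (x : ℕ) ∧ ∑ n, A n x < h x)).min' hS' with hj'def
    have hj'mem := Finset.min'_mem _ hS'
    rw [← hj'def] at hj'mem
    have hj'gt : (j : ℕ) < (j' : ℕ) := (Finset.mem_filter.mp hj'mem).2.1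
    have hj'sl : ∑ n, A n j' < h j' := (Finset.mem_filter.mp hj'mem).2.2
    have hj'min : ∀ x : Fin T, (j : ℕ) < (x : ℕ) → (x : ℕ) < (j' : ℕ) →
        h x ≤ ∑ n, A n x := by
      intro x h1 h2
      by_contra hx
      push_neg at hx
      have hle : j' ≤ x := Finset.min'_le _ x (Finset.mem_filter.mpr ⟨Finset.mem_univ x, h1, hx⟩)
      have := Fin.le_def.mp hle
      omega
    have hmid : ∀ x : Fin T, (j : ℕ) < (x : ℕ) → (x : ℕ) < (j' : ℕ) →
        ∑ n, A n x = h x := by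
      intro x h1 h2
      have hle : ∑ n, A n x ≤ h x := by
        by_contra hc
        push_neg at hc
        have := hjmax x hc
        omega
      exact le_antisymm hle (hj'min x h1 h2)
    have hrowex : ∃ n, A n j' < A n j := by
      by_contra hno
      push_neg at hno
      have h1 : ∑ n, A n j ≤ ∑ n, A n j' := Finset.sum_le_sum fun n _ => hno n
      have h2 : h j' ≤ h j := hanti (Fin.le_def.mpr (le_of_lt hj'gt))
      omega
    obtain ⟨n, hn⟩ := hrowex
    have hjne : j ≠ j' := by
      intro e
      rw [e] at hj'gt
      omega
    set A2 : Fin N → Fin T → ℕ := fun n' x =>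
      if n' = n then (if x = j then A n j - 1 else if x = j' then A n j' + 1 else A n x)
      else A n' x with hA2
    -- column sums of A2
    have hcolj : (∑ n', A2 n' j) + 1 = ∑ n', A n' j := by
      have hpt : ∀ n' : Fin N, A2 n' j + (if n' = n then 1 else 0) = A n' j := by
        intro n'
        rcases eq_or_ne n' n with e | e
        · subst e; simp [hA2, hjne]; omega
        · simp [hA2, e]
      calc (∑ n', A2 n' j) + 1
          = ∑ n', (A2 n' j + (if n' = n then 1 else 0)) := by
            rw [Finset.sum_add_distrib, Finset.sum_ite_eq' Finset.univ n (fun _ => (1:ℕ))]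
            simp
        _ = ∑ n', A n' j := Finset.sum_congr rfl (fun n' _ => hpt n')
    have hcolj' : ∑ n', A2 n' j' = (∑ n', A n' j') + 1 := by
      have hpt : ∀ n' : Fin N, A2 n' j' = A n' j' + (if n' = n then 1 else 0) := by
        intro n'
        rcases eq_or_ne n' n with e | e
        · subst e; simp [hA2, hjne.symm]
        · simp [hA2, e]
      calc ∑ n', A2 n' j' = ∑ n', (A n' j' + (if n' = n then 1 else 0)) :=
            Finset.sum_congr rfl (fun n' _ => hpt n')
        _ = (∑ n', A n' j') + 1 := by
            rw [Finset.sum_add_distrib, Finset.sum_ite_eq' Finset.univ n (fun _ => (1:ℕ))]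
            simp
    have hcolother : ∀ x : Fin T, x ≠ j → x ≠ j' → ∑ n', A2 n' x = ∑ n', A n' x := by
      intro x e1 e2
      apply Finset.sum_congr rfl
      intro n' _
      rcases eq_or_ne n' n with e | e
      · subst e; simp [hA2, e1, e2]
      · simp [hA2, e]
    -- caps
    have hcap2 : ∀ n' x, A2 n' x ≤ rbar n' := by
      intro n' x
      rcases eq_or_ne n' n with e | e
      · subst e
        rcases eq_or_ne x j with e1 | e1
        · subst e1; simp [hA2]; have := hcap n' j; omega
        · rcases eq_or_ne x j' with e2 | e2
          · subst e2; simp [hA2, e1]; have := hcap n' j; omega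
          · simp [hA2, e1, e2]; exact hcap n' x
      · simp [hA2, e]; exact hcap n' x
    -- rows
    have hrowkey : ∀ x : Fin T,
        A2 n x + (if x = j then 1 else 0) = A n x + (if x = j' then 1 else 0) := by
      intro x
      rcases eq_or_ne x j with e | e
      · subst e; simp [hA2, hjne]; omega
      · rcases eq_or_ne x j' with e2 | e2
        · subst e2; simp [hA2, e]
        · simp [hA2, e, e2]
    have hrow2 : ∀ n', ∑ x, A2 n' x = r n' := by
      intro n'
      rcases eq_or_ne n' n with e | e
      · subst e
        have h1 : ∑ x, (A2 n' x + (if x = j then 1 else 0))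
            = ∑ x, (A n' x + (if x = j' then 1 else 0)) :=
          Finset.sum_congr rfl (fun x _ => hrowkey x)
        rw [Finset.sum_add_distrib, Finset.sum_add_distrib,
          Finset.sum_ite_eq' Finset.univ j (fun _ => (1:ℕ)),
          Finset.sum_ite_eq' Finset.univ j' (fun _ => (1:ℕ))] at h1
        simp at h1
        have := hrow n'
        omega
      · calc ∑ x, A2 n' x = ∑ x, A n' x :=
            Finset.sum_congr rfl (fun x _ => by simp [hA2, e])
          _ = r n' := hrow n'
    -- middle bound
    have hmidbound : ∀ k : ℕ, (j : ℕ) < k → k ≤ (j' : ℕ) →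
        (∑ x ∈ Finset.univ.filter (fun x : Fin T => k ≤ (x : ℕ)), ∑ n', A n' x) + 1
          ≤ ∑ x ∈ Finset.univ.filter (fun x : Fin T => k ≤ (x : ℕ)), h x := by
      intro k hk1 hk2
      rw [tail_col_eq, tail_h_eq]
      have hj'T : (j' : ℕ) ≤ T := le_of_lt j'.isLt
      have hsA := Finset.sum_Ico_consecutive (colext A) hk2 hj'T
      have hsH := Finset.sum_Ico_consecutive (hext h) hk2 hj'T
      have hmideq : ∑ m ∈ Finset.Ico k (j' : ℕ), colext A m
          = ∑ m ∈ Finset.Ico k (j' : ℕ), hext h m := by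
        apply Finset.sum_congr rfl
        intro m hm
        obtain ⟨hm1, hm2⟩ := Finset.mem_Ico.mp hm
        have hmT : m < T := lt_trans hm2 j'.isLt
        have := hmid ⟨m, hmT⟩ (by simp; omega) (by simp; omega)
        simp [colext, hext, hmT]
        exact this
      have hpA := Finset.sum_eq_sum_Ico_succ_bot j'.isLt (colext A)
      have hpH := Finset.sum_eq_sum_Ico_succ_bot j'.isLt (hext h)
      have ht' := htailI ((j' : ℕ) + 1)
      have hcv := colext_val A j'
      have hhv := hext_val h j'
      omega
    -- new tails
    have htail2 : ∀ k : ℕ,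
        ∑ x ∈ Finset.univ.filter (fun x : Fin T => k ≤ (x : ℕ)), (∑ n', A2 n' x)
          ≤ ∑ x ∈ Finset.univ.filter (fun x : Fin T => k ≤ (x : ℕ)), h x := by
      intro k
      have hpt : ∀ x : Fin T, (∑ n', A2 n' x) + (if x = j then 1 else 0)
          = (∑ n', A n' x) + (if x = j' then 1 else 0) := by
        intro x
        rcases eq_or_ne x j with e | e
        · subst e; rw [if_pos rfl, if_neg hjne]; omega
        · rcases eq_or_ne x j' with e2 | e2
          · subst e2; rw [if_neg e, if_pos rfl]; omega
          · rw [if_neg e, if_neg e2, hcolother x e e2]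
      have tkey : (∑ x ∈ Finset.univ.filter (fun x : Fin T => k ≤ (x : ℕ)), ∑ n', A2 n' x)
            + (if j ∈ Finset.univ.filter (fun x : Fin T => k ≤ (x : ℕ)) then 1 else 0)
          = (∑ x ∈ Finset.univ.filter (fun x : Fin T => k ≤ (x : ℕ)), ∑ n', A n' x)
            + (if j' ∈ Finset.univ.filter (fun x : Fin T => k ≤ (x : ℕ)) then 1 else 0) := by
        rw [← Finset.sum_ite_eq' (Finset.univ.filter (fun x : Fin T => k ≤ (x : ℕ))) j
            (fun _ => (1:ℕ)),
          ← Finset.sum_ite_eq' (Finset.univ.filter (fun x : Fin T => k ≤ (x : ℕ))) j'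
            (fun _ => (1:ℕ)),
          ← Finset.sum_add_distrib, ← Finset.sum_add_distrib]
        exact Finset.sum_congr rfl (fun x _ => hpt x)
      have hjmem : (j ∈ Finset.univ.filter (fun x : Fin T => k ≤ (x : ℕ))) ↔ k ≤ (j : ℕ) := by
        simp
      have hj'mem2 : (j' ∈ Finset.univ.filter (fun x : Fin T => k ≤ (x : ℕ))) ↔ k ≤ (j' : ℕ) := by
        simp
      rcases le_or_gt k (j : ℕ) with hk | hk
      · rw [if_pos (hjmem.mpr hk), if_pos (hj'mem2.mpr (by omega))] at tkey
        have := htail k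
        omega
      · rcases le_or_gt k (j' : ℕ) with hk2 | hk2
        · rw [if_neg (fun hc => absurd (hjmem.mp hc) (by omega)),
            if_pos (hj'mem2.mpr hk2)] at tkey
          have := hmidbound k hk hk2
          omega
        · rw [if_neg (fun hc => absurd (hjmem.mp hc) (by omega)),
            if_neg (fun hc => absurd (hj'mem2.mp hc) (by omega))] at tkey
          have := htail k
          omega
    -- measure decreases
    have hD2 : (∑ x, ((∑ n', A2 n' x) - h x)) + 1 = ∑ x, ((∑ n', A n' x) - h x) := by
      have hpt : ∀ x : Fin T,
          ((∑ n', A2 n' x) - h x) + (if x = j then 1 else 0) = (∑ n', A n' x) - h x := by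
        intro x
        rcases eq_or_ne x j with e | e
        · subst e; rw [if_pos rfl]; omega
        · rcases eq_or_ne x j' with e2 | e2
          · subst e2; rw [if_neg e]; omega
          · rw [if_neg e, hcolother x e e2]; omega
      calc (∑ x, ((∑ n', A2 n' x) - h x)) + 1
          = ∑ x, (((∑ n', A2 n' x) - h x) + (if x = j then 1 else 0)) := by
            rw [Finset.sum_add_distrib, Finset.sum_ite_eq' Finset.univ j (fun _ => (1:ℕ))]
            simp
        _ = ∑ x, ((∑ n', A n' x) - h x) := Finset.sum_congr rfl (fun x _ => hpt x)
    exact ih A2 hcap2 hrow2 htail2 (by omega)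

/-- Rate-constrained adequacy with a uniform service time: a nonnegative integer matrix
with entries `A n j ≤ rbar n`, row sums `r n`, and column sums at most `h j` exists iff
for every `k ≤ T` the sum of the `T - k` smallest entries of `h` (here the tail entries,
since `h` is non-increasing) is at least `∑ n, [r n - rbar n * k]⁺`. -/
theorem rate_constrained_adequacy (N T : ℕ) (h : Fin T → ℕ) (hanti : Antitone h)
    (r rbar : Fin N → ℕ) (hrbar : ∀ n, 1 ≤ rbar n) :
    (∃ A : Fin N → Fin T → ℕ,
        (∀ n j, A n j ≤ rbar n) ∧
        (∀ n, ∑ j, A n j = r n) ∧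
        (∀ j, ∑ n, A n j ≤ h j)) ↔
      (∀ k ≤ T, ∑ n, (r n - rbar n * k) ≤
        ∑ j ∈ Finset.univ.filter (fun j : Fin T => k ≤ (j : ℕ)), h j) := by
  constructor
  · rintro ⟨A, hcap, hrow, hcol⟩ k hk
    have hpt : ∀ n, r n - rbar n * k ≤
        ∑ j ∈ Finset.univ.filter (fun j : Fin T => k ≤ (j : ℕ)), A n j := by
      intro n
      have hsplit := Finset.sum_filter_add_sum_filter_not Finset.univ
        (fun j : Fin T => k ≤ (j : ℕ)) (A n)
      rw [hrow n] at hsplit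
      have hcard : (Finset.univ.filter (fun j : Fin T => ¬ k ≤ (j : ℕ))).card ≤ k := by
        have : (Finset.univ.filter (fun j : Fin T => ¬ k ≤ (j : ℕ))).card
            ≤ (Finset.range k).card :=
          Finset.card_le_card_of_injOn (fun j => (j : ℕ))
            (by intro j hj; simp at hj ⊢; omega)
            (by intro a _ b _ hab; exact Fin.ext hab)
        simpa using this
      have hbound : ∑ j ∈ Finset.univ.filter (fun j : Fin T => ¬ k ≤ (j : ℕ)), A n j
          ≤ rbar n * k := by
        calc ∑ j ∈ Finset.univ.filter (fun j : Fin T => ¬ k ≤ (j : ℕ)), A n j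
            ≤ ∑ _j ∈ Finset.univ.filter (fun j : Fin T => ¬ k ≤ (j : ℕ)), rbar n :=
              Finset.sum_le_sum (fun j _ => hcap n j)
          _ = (Finset.univ.filter (fun j : Fin T => ¬ k ≤ (j : ℕ))).card * rbar n := by
              rw [Finset.sum_const, smul_eq_mul]
          _ ≤ k * rbar n := Nat.mul_le_mul_right _ hcard
          _ = rbar n * k := Nat.mul_comm _ _
      omega
    calc ∑ n, (r n - rbar n * k)
        ≤ ∑ n, ∑ j ∈ Finset.univ.filter (fun j : Fin T => k ≤ (j : ℕ)), A n j :=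
          Finset.sum_le_sum (fun n _ => hpt n)
      _ = ∑ j ∈ Finset.univ.filter (fun j : Fin T => k ≤ (j : ℕ)), ∑ n, A n j :=
          Finset.sum_comm
      _ ≤ ∑ j ∈ Finset.univ.filter (fun j : Fin T => k ≤ (j : ℕ)), h j :=
          Finset.sum_le_sum (fun j _ => hcol j)
  · intro hcond
    have hrT : ∀ n, r n - rbar n * T = 0 := by
      have h0 := hcond T le_rfl
      have hempty : (Finset.univ.filter (fun j : Fin T => T ≤ (j : ℕ))) = ∅ := by
        apply Finset.filter_false_of_mem
        intro j _; exact Nat.not_le.mpr j.isLt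
      rw [hempty, Finset.sum_empty, Nat.le_zero, Finset.sum_eq_zero_iff] at h0
      intro n; exact h0 n (Finset.mem_univ n)
    set A₀ : Fin N → Fin T → ℕ := fun n j => min (rbar n) (r n - rbar n * (j : ℕ)) with hA₀
    have htail₀ : ∀ n (k : ℕ), k ≤ T →
        ∑ j ∈ Finset.univ.filter (fun j : Fin T => k ≤ (j : ℕ)), A₀ n j
          = r n - rbar n * k := by
      intro n k hk
      rw [filter_sum_eq_Ico (fun j => A₀ n j) k]
      have : ∑ m ∈ Finset.Ico k T, (if hm : m < T then A₀ n ⟨m, hm⟩ else 0)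
          = ∑ m ∈ Finset.Ico k T, min (rbar n) (r n - rbar n * m) := by
        apply Finset.sum_congr rfl
        intro m hm
        have hmT : m < T := (Finset.mem_Ico.mp hm).2
        rw [dif_pos hmT]
      rw [this, greedy_seg (rbar n) (r n) T k hk, hrT n]
      omega
    refine exists_from_tail h hanti r rbar (∑ j, ((∑ n, A₀ n j) - h j)) A₀ ?_ ?_ ?_ le_rfl
    · intro n j; exact min_le_left _ _
    · intro n
      have := htail₀ n 0 (Nat.zero_le T)
      have hfull : (Finset.univ.filter (fun j : Fin T => 0 ≤ (j : ℕ))) = Finset.univ := by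
        apply Finset.filter_true_of_mem; intro j _; exact Nat.zero_le _
      rw [hfull] at this
      rw [this]; omega
    · intro k
      rcases le_or_gt k T with hk | hk
      · calc ∑ j ∈ Finset.univ.filter (fun j : Fin T => k ≤ (j : ℕ)), ∑ n, A₀ n j
            = ∑ n, ∑ j ∈ Finset.univ.filter (fun j : Fin T => k ≤ (j : ℕ)), A₀ n j :=
              Finset.sum_comm
          _ = ∑ n, (r n - rbar n * k) :=
              Finset.sum_congr rfl (fun n _ => htail₀ n k hk)
          _ ≤ ∑ j ∈ Finset.univ.filter (fun j : Fin T => k ≤ (j : ℕ)), h j := hcond k hk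
      · have hempty : (Finset.univ.filter (fun j : Fin T => k ≤ (j : ℕ))) = ∅ := by
          apply Finset.filter_false_of_mem
          intro j _; have := j.isLt; omega
        rw [hempty]; simp
end

section
/- Load decomposition: let r, r̄ be nonnegative integers with r̄ ≥ 1, and write r = q·r̄ + p with 0 ≤ p < r̄. A vector c in N^T satisfies 0 ≤ c_j ≤ r̄ for all j and Σ_j c_j = r if and only if c can be written as a sum of r̄ vectors in {0,1}^T, of which p have exactly q+1 ones and r̄ − p have exactly q ones. -/
private lemma sumdiv_aux (rbar : ℕ) (h : 1 ≤ rbar) :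
    ∀ n, ∑ k ∈ Finset.range rbar, (n + k) / rbar = n := by
  intro n
  induction n with
  | zero =>
    apply Finset.sum_eq_zero
    intro k hk
    exact Nat.div_eq_of_lt (by simpa using Finset.mem_range.mp hk)
  | succ n ih =>
    have h1 := Finset.sum_range_succ (fun k => (n + k) / rbar) rbar
    have h2 := Finset.sum_range_succ' (fun k => (n + k) / rbar) rbar
    have key : ∑ k ∈ Finset.range rbar, (n + k) / rbar + (n + rbar) / rbar
        = ∑ k ∈ Finset.range rbar, (n + (k + 1)) / rbar + (n + 0) / rbar :=
      h1.symm.trans h2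
    have h3 : (n + rbar) / rbar = n / rbar + 1 := Nat.add_div_right n h
    have h4 : ∑ k ∈ Finset.range rbar, (n + (k + 1)) / rbar
        = ∑ k ∈ Finset.range rbar, (n + 1 + k) / rbar := by
      apply Finset.sum_congr rfl
      intro k _
      ring_nf
    rw [ih, h3, h4] at key
    simp only [Nat.add_zero] at key
    omega

private lemma tele_aux (F : ℕ → ℕ) (hF : ∀ j, F j ≤ F (j + 1)) :
    ∀ T, ∑ j ∈ Finset.range T, (F (j + 1) - F j) = F T - F 0 := by
  have hmono : Monotone F := monotone_nat_of_le_succ hF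
  intro T
  induction T with
  | zero => simp
  | succ T ih =>
    rw [Finset.sum_range_succ, ih]
    have h1 : F 0 ≤ F T := hmono (Nat.zero_le _)
    have h2 : F T ≤ F (T + 1) := hF T
    omega

/-- Load decomposition: a charging profile `c` with entries capped by `rbar` and total `r`
exists exactly when it decomposes as a sum of `rbar` (0,1)-profiles, `p` of which have
exactly `q + 1` ones and the remaining `rbar - p` of which have exactly `q` ones, where
`r = q * rbar + p` with `0 ≤ p < rbar`. -/
theorem load_decomposition (T r rbar p q : ℕ) (hrbar : 1 ≤ rbar)
    (hp : p < rbar) (hr : r = q * rbar + p) (c : Fin T → ℕ) :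
    ((∀ j, c j ≤ rbar) ∧ (∑ j, c j = r)) ↔
      (∃ f : Fin rbar → Fin T → ℕ,
        (∀ i j, f i j ≤ 1) ∧
        (∀ j, ∑ i, f i j = c j) ∧
        (Finset.univ.filter (fun i : Fin rbar => (∑ j, f i j) = q + 1)).card = p ∧
        (∀ i, (∑ j, f i j = q + 1) ∨ (∑ j, f i j = q))) := by
  constructor
  · rintro ⟨hle, hsum⟩
    set c' : ℕ → ℕ := fun k => if h : k < T then c ⟨k, h⟩ else 0 with hc'
    set S : ℕ → ℕ := fun j => ∑ k ∈ Finset.range j, c' k with hS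
    set g : ℕ → ℕ → ℕ := fun i n => (n + (rbar - 1 - i)) / rbar with hg
    have hc'val : ∀ j : Fin T, c' j.val = c j := by
      intro j
      simp [hc', j.isLt]
    have hc'le : ∀ k, c' k ≤ rbar := by
      intro k
      by_cases h : k < T
      · simp only [hc', dif_pos h]; exact hle _
      · simp [hc', h]
    have hSsucc : ∀ j : ℕ, S (j + 1) = S j + c' j := fun j => Finset.sum_range_succ _ j
    have hST : S T = r := by
      rw [← hsum]
      show (∑ k ∈ Finset.range T, c' k) = ∑ j, c j
      rw [← Fin.sum_univ_eq_sum_range (fun k => c' k) T]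
      exact Finset.sum_congr rfl fun j _ => hc'val j
    have hgmono : ∀ i, Monotone (g i) := by
      intro i a b hab
      exact Nat.div_le_div_right (Nat.add_le_add_right hab _)
    have hgstep : ∀ i a b, b ≤ a + rbar → g i b ≤ g i a + 1 := by
      intro i a b hb
      calc g i b ≤ g i (a + rbar) := hgmono i hb
        _ = g i a + 1 := by
            show (a + rbar + (rbar - 1 - i)) / rbar = (a + (rbar - 1 - i)) / rbar + 1
            rw [show a + rbar + (rbar - 1 - i) = a + (rbar - 1 - i) + rbar by ring,
              Nat.add_div_right _ hrbar]
    have hgsum : ∀ n, ∑ i : Fin rbar, g i.val n = n := by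
      intro n
      rw [Fin.sum_univ_eq_sum_range (fun i => g i n) rbar]
      show ∑ i ∈ Finset.range rbar, (n + (rbar - 1 - i)) / rbar = n
      rw [Finset.sum_range_reflect (fun k => (n + k) / rbar) rbar]
      exact sumdiv_aux rbar hrbar n
    have hgr : ∀ i : Fin rbar, g i.val r = if i.val < p then q + 1 else q := by
      intro i
      have hi : i.val < rbar := i.isLt
      set d := rbar - 1 - i.val with hd
      show (r + d) / rbar = if i.val < p then q + 1 else q
      rw [hr, show q * rbar + p + d = rbar * q + (p + d) by ring,
        Nat.mul_add_div hrbar q (p + d)]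
      by_cases h : i.val < p
      · rw [if_pos h]
        have h1 : (p + d) / rbar = 1 := by
          apply Nat.div_eq_of_lt_le <;> omega
        omega
      · rw [if_neg h]
        have h1 : (p + d) / rbar = 0 := Nat.div_eq_of_lt (by omega)
        omega
    refine ⟨fun i j => g i.val (S (j.val + 1)) - g i.val (S j.val), ?_, ?_, ?_, ?_⟩
    · intro i j
      have := hgstep i.val (S j.val) (S (j.val + 1))
        (by rw [hSsucc]; exact Nat.add_le_add_left (hc'le _) _)
      show g i.val (S (j.val + 1)) - g i.val (S j.val) ≤ 1
      omega
    · intro j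
      have hmle : ∀ x ∈ Finset.univ, g (x : Fin rbar).val (S j.val)
          ≤ g x.val (S (j.val + 1)) := fun x _ => hgmono x.val (by rw [hSsucc]; omega)
      rw [Finset.sum_tsub_distrib Finset.univ hmle, hgsum, hgsum, hSsucc, ← hc'val j]
      omega
    · have hrowval : ∀ i : Fin rbar,
          (∑ j : Fin T, (g i.val (S (j.val + 1)) - g i.val (S j.val)))
            = if i.val < p then q + 1 else q := by
        intro i
        rw [Fin.sum_univ_eq_sum_range
          (fun j => g i.val (S (j + 1)) - g i.val (S j)) T,
          tele_aux (fun j => g i.val (S j)) (fun j => hgmono i.val (by rw [hSsucc]; omega)) T,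
          hST]
        have hS0 : S 0 = 0 := by simp [hS]
        have hg0 : g i.val 0 = 0 := Nat.div_eq_of_lt (by have := i.isLt; omega)
        rw [hS0, hg0, Nat.sub_zero, hgr i]
      have hfilter : Finset.univ.filter
          (fun i : Fin rbar =>
            (∑ j : Fin T, (g i.val (S (j.val + 1)) - g i.val (S j.val))) = q + 1)
          = Finset.Iio (⟨p, hp⟩ : Fin rbar) := by
        ext i
        simp only [Finset.mem_filter, Finset.mem_univ, true_and, Finset.mem_Iio,
          hrowval i, Fin.lt_def]
        by_cases h : i.val < p <;> simp [h]
      rw [hfilter, Fin.card_Iio]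
    · intro i
      have hrowval :
          (∑ j : Fin T, (g i.val (S (j.val + 1)) - g i.val (S j.val)))
            = if i.val < p then q + 1 else q := by
        rw [Fin.sum_univ_eq_sum_range
          (fun j => g i.val (S (j + 1)) - g i.val (S j)) T,
          tele_aux (fun j => g i.val (S j)) (fun j => hgmono i.val (by rw [hSsucc]; omega)) T,
          hST]
        have hS0 : S 0 = 0 := by simp [hS]
        have hg0 : g i.val 0 = 0 := Nat.div_eq_of_lt (by have := i.isLt; omega)
        rw [hS0, hg0, Nat.sub_zero, hgr i]
      rw [hrowval]
      by_cases h : i.val < p <;> simp [h]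
  · rintro ⟨f, hf1, hfc, hcard, hfrow⟩
    constructor
    · intro j
      rw [← hfc j]
      calc ∑ i, f i j ≤ ∑ _i : Fin rbar, 1 := Finset.sum_le_sum fun i _ => hf1 i j
        _ = rbar := by simp
    · have hcomm : ∑ j, c j = ∑ i : Fin rbar, ∑ j, f i j := by
        rw [Finset.sum_comm]
        exact (Finset.sum_congr rfl fun j _ => hfc j).symm
      set A := Finset.univ.filter (fun i : Fin rbar => (∑ j, f i j) = q + 1) with hA
      have hsplit := Finset.sum_filter_add_sum_filter_not Finset.univ
        (fun i : Fin rbar => (∑ j, f i j) = q + 1) (fun i => ∑ j, f i j)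
      have hsumA : ∑ i ∈ A, ∑ j, f i j = p * (q + 1) := by
        rw [Finset.sum_congr rfl (fun i hi => (Finset.mem_filter.mp hi).2),
          Finset.sum_const, hcard, smul_eq_mul]
      have hcardB : (Finset.univ.filter
          (fun i : Fin rbar => ¬ (∑ j, f i j) = q + 1)).card = rbar - p := by
        have := Finset.card_filter_add_card_filter_not
          (s := (Finset.univ : Finset (Fin rbar)))
          (p := fun i : Fin rbar => (∑ j, f i j) = q + 1)
        simp only [Finset.card_univ, Fintype.card_fin] at this
        rw [← hA] at this
        omega
      have hsumB : ∑ i ∈ Finset.univ.filter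
          (fun i : Fin rbar => ¬ (∑ j, f i j) = q + 1), ∑ j, f i j = (rbar - p) * q := by
        rw [Finset.sum_congr rfl (fun i hi => by
          have h2 := (Finset.mem_filter.mp hi).2
          rcases hfrow i with h | h
          · exact absurd h h2
          · exact h), Finset.sum_const, hcardB, smul_eq_mul]
      rw [hcomm, ← hsplit, hsumA, hsumB, hr]
      obtain ⟨d, hd⟩ : ∃ d, rbar = p + d := ⟨rbar - p, by omega⟩
      subst hd
      simp only [Nat.add_sub_cancel_left]
      ring
end
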